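/- arXiv:1401.2236 — 4 statements merged into one kernel-verified Lean document; each statement's English description precedes it below -/
import Mathlib

section
/- For every integer n ≥ 1, 0 < b_n ≤ 1/(n(n+1)). -/
/-- For every integer `n ≥ 1`, `0 < b n ≤ 1/(n(n+1))`. -/
theorem b_pos_and_le (b : ℕ → ℝ) (hb1 : b 1 = 1 / 2)
    (hb : ∀ n : ℕ, 2 ≤ n →
      b n = (1 / (n : ℝ)) * (1 / ((n : ℝ) + 1) -
        ∑ k ∈ Finset.range (n - 1), b (n - k - 1) / ((k : ℝ) + 2)))
    (n : ℕ) (hn : 1 ≤ n) :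
    0 < b n ∧ b n ≤ 1 / ((n : ℝ) * ((n : ℝ) + 1)) := by
  have key : ∀ m : ℕ, 2 ≤ m → (m:ℝ) * b m =
      1/((m:ℝ)+1) - ∑ k ∈ Finset.range (m-1), b (m-k-1) / ((k:ℝ)+2) := by
    intro m hm
    have hne : (m:ℝ) ≠ 0 := by
      have : 0 < m := by omega
      exact_mod_cast this.ne'
    rw [hb m hm]
    field_simp
  have pos : ∀ m, 1 ≤ m → 0 < b m := by
    intro m
    induction m using Nat.strong_induction_on with
    | _ m ih =>
      intro hm
      match m, hm with
      | 1, _ => rw [hb1]; norm_num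
      | 2, _ =>
        rw [hb 2 (by norm_num)]
        simp [Finset.sum_range_one, hb1]
        norm_num
      | (m+3), _ =>
        have ihx : 0 < b (m+2) := ih (m+2) (by omega) (by omega)
        have e1 := key (m+3) (by omega)
        have e2 := key (m+2) (by omega)
        have h31 : (m+3) - 1 = m + 2 := rfl
        have h21 : (m+2) - 1 = m + 1 := rfl
        rw [h31] at e1
        rw [h21] at e2
        rw [Finset.sum_range_succ'] at e1
        have hs1 : ∀ k : ℕ, m+3-(k+1)-1 = m+1-k := fun k => by omega
        have hs2 : ∀ k : ℕ, m+2-k-1 = m+1-k := fun k => by omega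
        simp only [hs1] at e1
        simp only [hs2] at e2
        push_cast at e1 e2
        rw [show ((m:ℝ)+3+1) = (m:ℝ)+4 by ring, show ((0:ℝ)+2) = 2 by norm_num] at e1
        rw [show ((m:ℝ)+2+1) = (m:ℝ)+3 by ring] at e2
        -- e1 : (m+3) * b (m+3) = 1/(m+4) - (∑ k, b (m+1-k)/(k+1+2) + b (m+2)/2)
        -- e2 : (m+2) * b (m+2) = 1/(m+3) - ∑ k, b (m+1-k)/(k+2)
        set S := ∑ k ∈ Finset.range (m+1), b (m+1-k) / ((k:ℝ)+2) with hS
        have hterm : ∀ k ∈ Finset.range (m+1),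
            b (m+1-k) / ((k:ℝ)+1+2) ≤ ((m:ℝ)+2)/((m:ℝ)+3) * (b (m+1-k) / ((k:ℝ)+2)) := by
          intro k hk
          have hk' : k ≤ m := by simpa [Nat.lt_succ_iff] using hk
          have hkR : (k:ℝ) ≤ m := by exact_mod_cast hk'
          have hbpos : 0 < b (m+1-k) := ih (m+1-k) (by omega) (by omega)
          rw [show ((k:ℝ)+1+2) = (k:ℝ)+3 by ring, div_mul_div_comm,
            div_le_div_iff₀ (by positivity) (by positivity)]
          nlinarith [mul_nonneg hbpos.le (sub_nonneg.mpr hkR)]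
        have hsum : ∑ k ∈ Finset.range (m+1), b (m+1-k) / ((k:ℝ)+1+2)
            ≤ ((m:ℝ)+2)/((m:ℝ)+3) * S := by
          rw [hS, Finset.mul_sum]
          exact Finset.sum_le_sum hterm
        have hM : (0:ℝ) ≤ m := Nat.cast_nonneg m
        have hSval : S = 1/((m:ℝ)+3) - ((m:ℝ)+2) * b (m+2) := by linarith
        have c1 : 1/((m:ℝ)+4) - ((m:ℝ)+2)/((m:ℝ)+3)*(1/((m:ℝ)+3))
            = 1/((((m:ℝ)+4))*(((m:ℝ)+3)^2)) := by
          field_simp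
          ring
        have c1' : (0:ℝ) < 1/((((m:ℝ)+4))*(((m:ℝ)+3)^2)) := by positivity
        have c2 : (1:ℝ)/2 ≤ ((m:ℝ)+2)^2/((m:ℝ)+3) := by
          rw [le_div_iff₀ (by positivity)]
          nlinarith
        have c2' : b (m+2) / 2 ≤ ((m:ℝ)+2)^2/((m:ℝ)+3) * b (m+2) := by
          have := mul_le_mul_of_nonneg_right c2 ihx.le
          linarith [this]
        have hmain : 0 < ((m:ℝ)+3) * b (m+3) := by
          have expand : ((m:ℝ)+2)/((m:ℝ)+3) * S
              = ((m:ℝ)+2)/((m:ℝ)+3)*(1/((m:ℝ)+3)) - ((m:ℝ)+2)^2/((m:ℝ)+3) * b (m+2) := by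
            rw [hSval]; ring
          linarith [e1, hsum, expand, c1, c1', c2']
        nlinarith [hmain, hM]
  refine ⟨pos n hn, ?_⟩
  match n, hn with
  | 1, _ => rw [hb1]; norm_num
  | (n+2), _ =>
    have e := key (n+2) (by omega)
    have hSnn : 0 ≤ ∑ k ∈ Finset.range (n+1), b (n+2-k-1) / ((k:ℝ)+2) := by
      apply Finset.sum_nonneg
      intro k hk
      have hk' : k < n + 1 := by simpa using hk
      exact div_nonneg (pos _ (by omega)).le (by positivity)
    have hub : ((n:ℝ)+2) * b (n+2) ≤ 1/((n:ℝ)+2+1) := by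
      push_cast at e
      linarith
    have hn0 : (0:ℝ) < (n:ℝ)+2 := by positivity
    have hrec : (1/(((n:ℝ)+2)+1)) * (((n:ℝ)+2)+1) = 1 := by field_simp
    push_cast
    rw [le_div_iff₀ (by positivity)]
    nlinarith [hub, hn0, hrec]
end

section
/- The sequence of ratios b_{n+1}/b_n converges to 1 as n → ∞. -/
lemma sum_inv_sq_two (m : ℕ) : ∑ j ∈ Finset.range m, (1:ℝ)/((j:ℝ)+2)^2 ≤ 13/20 := by
  have key : ∀ m : ℕ, 1 ≤ m → ∑ j ∈ Finset.range m, (1:ℝ)/((j:ℝ)+2)^2 ≤ 13/20 - 1/((m:ℝ)+3/2) := by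
    intro m hm
    induction m, hm using Nat.le_induction with
    | base => norm_num
    | succ m hm ih =>
      rw [Finset.sum_range_succ]
      have h1 : (0:ℝ) < (m:ℝ) + 3/2 := by positivity
      have h2 : (0:ℝ) < (m:ℝ) + 5/2 := by positivity
      have h3 : (1:ℝ)/((m:ℝ)+2)^2 ≤ 1/((m:ℝ)+3/2) - 1/((m:ℝ)+5/2) := by
        rw [div_sub_div _ _ (ne_of_gt h1) (ne_of_gt h2)]
        rw [div_le_div_iff₀ (by positivity) (by positivity)]
        nlinarith [sq_nonneg ((m:ℝ))]
      have e : (1:ℝ)/(((m:ℝ)+1)+3/2) = 1/((m:ℝ)+5/2) := by ring_nf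
      push_cast
      linarith [ih, h3, e]
  rcases Nat.eq_zero_or_pos m with h | h
  · simp [h]; norm_num
  · have h2 : (0:ℝ) < 1/((m:ℝ)+3/2) := by positivity
    linarith [key m h]

lemma sum_inv_sq_one (m : ℕ) : ∑ j ∈ Finset.range m, (1:ℝ)/((j:ℝ)+1)^2 ≤ 33/20 := by
  cases m with
  | zero => simp; norm_num
  | succ m =>
    rw [Finset.sum_range_succ']
    have h1 : ∑ k ∈ Finset.range m, (1:ℝ)/((((k+1):ℕ):ℝ)+1)^2 ≤ 13/20 := by
      refine le_trans (le_of_eq (Finset.sum_congr rfl fun k _ => ?_)) (sum_inv_sq_two m)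
      push_cast; ring_nf
    have h0 : (1:ℝ)/(((0:ℕ):ℝ)+1)^2 = 1 := by norm_num
    linarith [h1, h0]

lemma sum_inv_le_log (m : ℕ) : ∑ j ∈ Finset.range m, (1:ℝ)/((j:ℝ)+2) ≤ Real.log ((m:ℝ)+1) := by
  induction m with
  | zero => simp
  | succ m ih =>
    rw [Finset.sum_range_succ]
    have h1 : (0:ℝ) < (m:ℝ)+1 := by positivity
    have h2 : (0:ℝ) < (m:ℝ)+2 := by positivity
    have hlog := Real.log_le_sub_one_of_pos (show (0:ℝ) < ((m:ℝ)+1)/((m:ℝ)+2) by positivity)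
    rw [Real.log_div (ne_of_gt h1) (ne_of_gt h2)] at hlog
    have heq : ((m:ℝ)+1)/((m:ℝ)+2) - 1 = -(1/((m:ℝ)+2)) := by field_simp; ring
    have e2 : Real.log ((m:ℝ)+1+1) = Real.log ((m:ℝ)+2) := by congr 1; ring
    push_cast
    linarith [ih, hlog, heq, e2]

lemma sum_inv_one_le_log (m : ℕ) (hm : 1 ≤ m) :
    ∑ j ∈ Finset.range m, (1:ℝ)/((j:ℝ)+1) ≤ 1 + Real.log (m:ℝ) := by
  induction m, hm using Nat.le_induction with
  | base => simp
  | succ m hm ih =>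
    rw [Finset.sum_range_succ]
    have h1 : (0:ℝ) < (m:ℝ) := by exact_mod_cast hm
    have hlog := Real.log_le_sub_one_of_pos (show (0:ℝ) < (m:ℝ)/((m:ℝ)+1) by positivity)
    rw [Real.log_div (ne_of_gt h1) (by positivity)] at hlog
    have heq : (m:ℝ)/((m:ℝ)+1) - 1 = -(1/((m:ℝ)+1)) := by field_simp; ring
    push_cast
    linarith [ih, hlog, heq]

lemma log_le_lin (M : ℝ) (h : 2 ≤ M) : Real.log M ≤ M/32 + 247/100 := by
  have hM : (0:ℝ) < M := by linarith
  have e1 : Real.log M = Real.log (M/32) + Real.log 32 := by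
    rw [← Real.log_mul (by positivity) (by norm_num)]
    congr 1; field_simp
  have e2 : Real.log (M/32) ≤ M/32 - 1 := Real.log_le_sub_one_of_pos (by positivity)
  have e3 : Real.log 32 = 5 * Real.log 2 := by
    rw [show (32:ℝ) = 2^5 by norm_num, Real.log_pow]; push_cast; ring
  rw [e1, e3]
  nlinarith [Real.log_two_lt_d9]

set_option maxHeartbeats 1000000 in
lemma base_vals (b : ℕ → ℝ) (hb1 : b 1 = 1 / 2)
    (hb : ∀ n : ℕ, 2 ≤ n →
      b n = (1 / (n : ℝ)) * (1 / ((n : ℝ) + 1) -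
        ∑ k ∈ Finset.range (n - 1), b (n - k - 1) / ((k : ℝ) + 2))) :
    ∀ n : ℕ, 2 ≤ n → n < 30 → 0 < b n ∧ b n ≤ 1 / (2 * (n:ℝ)^2) := by
  have e2 : b 2 = 1 / 24 := by
    rw [hb 2 (by norm_num)]
    simp only [Finset.sum_range_succ, Finset.sum_range_zero]
    norm_num [hb1]
  have e3 : b 3 = 1 / 48 := by
    rw [hb 3 (by norm_num)]
    simp only [Finset.sum_range_succ, Finset.sum_range_zero]
    norm_num [hb1, e2]
  have e4 : b 4 = 73 / 5760 := by
    rw [hb 4 (by norm_num)]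
    simp only [Finset.sum_range_succ, Finset.sum_range_zero]
    norm_num [hb1, e2, e3]
  have e5 : b 5 = 11 / 1280 := by
    rw [hb 5 (by norm_num)]
    simp only [Finset.sum_range_succ, Finset.sum_range_zero]
    norm_num [hb1, e2, e3, e4]
  have e6 : b 6 = 3625 / 580608 := by
    rw [hb 6 (by norm_num)]
    simp only [Finset.sum_range_succ, Finset.sum_range_zero]
    norm_num [hb1, e2, e3, e4, e5]
  have e7 : b 7 = 5525 / 1161216 := by
    rw [hb 7 (by norm_num)]
    simp only [Finset.sum_range_succ, Finset.sum_range_zero]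
    norm_num [hb1, e2, e3, e4, e5, e6]
  have e8 : b 8 = 5233001 / 1393459200 := by
    rw [hb 8 (by norm_num)]
    simp only [Finset.sum_range_succ, Finset.sum_range_zero]
    norm_num [hb1, e2, e3, e4, e5, e6, e7]
  have e9 : b 9 = 1212281 / 398131200 := by
    rw [hb 9 (by norm_num)]
    simp only [Finset.sum_range_succ, Finset.sum_range_zero]
    norm_num [hb1, e2, e3, e4, e5, e6, e7, e8]
  have e10 : b 10 = 927777937 / 367873228800 := by
    rw [hb 10 (by norm_num)]
    simp only [Finset.sum_range_succ, Finset.sum_range_zero]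
    norm_num [hb1, e2, e3, e4, e5, e6, e7, e8, e9]
  have e11 : b 11 = 772193 / 363331584 := by
    rw [hb 11 (by norm_num)]
    simp only [Finset.sum_range_succ, Finset.sum_range_zero]
    norm_num [hb1, e2, e3, e4, e5, e6, e7, e8, e9, e10]
  have e12 : b 12 = 43791735453787 / 24103053950976000 := by
    rw [hb 12 (by norm_num)]
    simp only [Finset.sum_range_succ, Finset.sum_range_zero]
    norm_num [hb1, e2, e3, e4, e5, e6, e7, e8, e9, e10, e11]
  have e13 : b 13 = 6889178449747 / 4382373445632000 := by
    rw [hb 13 (by norm_num)]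
    simp only [Finset.sum_range_succ, Finset.sum_range_zero]
    norm_num [hb1, e2, e3, e4, e5, e6, e7, e8, e9, e10, e11, e12]
  have e14 : b 14 = 158996102434867 / 115694658964684800 := by
    rw [hb 14 (by norm_num)]
    simp only [Finset.sum_range_succ, Finset.sum_range_zero]
    norm_num [hb1, e2, e3, e4, e5, e6, e7, e8, e9, e10, e11, e12, e13]
  have e15 : b 15 = 107876982981287 / 88995891511296000 := by
    rw [hb 15 (by norm_num)]
    simp only [Finset.sum_range_succ, Finset.sum_range_zero]
    norm_num [hb1, e2, e3, e4, e5, e6, e7, e8, e9, e10, e11, e12, e13, e14]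
  have e16 : b 16 = 782501215247703271 / 726206474732175360000 := by
    rw [hb 16 (by norm_num)]
    simp only [Finset.sum_range_succ, Finset.sum_range_zero]
    norm_num [hb1, e2, e3, e4, e5, e6, e7, e8, e9, e10, e11, e12, e13, e14, e15]
  have e17 : b 17 = 6225541612992329 / 6455168664286003200 := by
    rw [hb 17 (by norm_num)]
    simp only [Finset.sum_range_succ, Finset.sum_range_zero]
    norm_num [hb1, e2, e3, e4, e5, e6, e7, e8, e9, e10, e11, e12, e13, e14, e15, e16]
  have e18 : b 18 = 235541803917995571502409 / 271211974879377138647040000 := by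
    rw [hb 18 (by norm_num)]
    simp only [Finset.sum_range_succ, Finset.sum_range_zero]
    norm_num [hb1, e2, e3, e4, e5, e6, e7, e8, e9, e10, e11, e12, e13, e14, e15, e16, e17]
  have e19 : b 19 = 25090164727214720963369 / 31907291162279663370240000 := by
    rw [hb 19 (by norm_num)]
    simp only [Finset.sum_range_succ, Finset.sum_range_zero]
    norm_num [hb1, e2, e3, e4, e5, e6, e7, e8, e9, e10, e11, e12, e13, e14, e15, e16, e17, e18]
  have e20 : b 20 = 365914935277511648331942781 / 511428295486825461448704000000 := by
    rw [hb 20 (by norm_num)]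
    simp only [Finset.sum_range_succ, Finset.sum_range_zero]
    norm_num [hb1, e2, e3, e4, e5, e6, e7, e8, e9, e10, e11, e12, e13, e14, e15, e16, e17, e18, e19]
  have e21 : b 21 = 246411288831709247125971667 / 376841901937660866330624000000 := by
    rw [hb 21 (by norm_num)]
    simp only [Finset.sum_range_succ, Finset.sum_range_zero]
    norm_num [hb1, e2, e3, e4, e5, e6, e7, e8, e9, e10, e11, e12, e13, e14, e15, e16, e17, e18, e19, e20]
  have e22 : b 22 = 169387106983070106819414702707 / 282308419108727654719684608000000 := by
    rw [hb 22 (by norm_num)]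
    simp only [Finset.sum_range_succ, Finset.sum_range_zero]
    norm_num [hb1, e2, e3, e4, e5, e6, e7, e8, e9, e10, e11, e12, e13, e14, e15, e16, e17, e18, e19, e20, e21]
  have e23 : b 23 = 54422752167139466649091099 / 98485406980194542026752000000 := by
    rw [hb 23 (by norm_num)]
    simp only [Finset.sum_range_succ, Finset.sum_range_zero]
    norm_num [hb1, e2, e3, e4, e5, e6, e7, e8, e9, e10, e11, e12, e13, e14, e15, e16, e17, e18, e19, e20, e21, e22]
  have e24 : b 24 = 132236250522670958194342553927282987 / 258955866680053703121272297226240000000 := by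
    rw [hb 24 (by norm_num)]
    simp only [Finset.sum_range_succ, Finset.sum_range_zero]
    norm_num [hb1, e2, e3, e4, e5, e6, e7, e8, e9, e10, e11, e12, e13, e14, e15, e16, e17, e18, e19, e20, e21, e22, e23]
  have e25 : b 25 = 560999442864517206573456463863353 / 1185152707917865918175159255040000000 := by
    rw [hb 25 (by norm_num)]
    simp only [Finset.sum_range_succ, Finset.sum_range_zero]
    norm_num [hb1, e2, e3, e4, e5, e6, e7, e8, e9, e10, e11, e12, e13, e14, e15, e16, e17, e18, e19, e20, e21, e22, e23, e24]
  have e26 : b 26 = 109393703877073602375656959252717561 / 248597632012851554996421405337190400000 := by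
    rw [hb 26 (by norm_num)]
    simp only [Finset.sum_range_succ, Finset.sum_range_zero]
    norm_num [hb1, e2, e3, e4, e5, e6, e7, e8, e9, e10, e11, e12, e13, e14, e15, e16, e17, e18, e19, e20, e21, e22, e23, e24, e25]
  have e27 : b 27 = 326288394020379441156988461470833 / 795512422441124975988548497079009280 := by
    rw [hb 27 (by norm_num)]
    simp only [Finset.sum_range_succ, Finset.sum_range_zero]
    norm_num [hb1, e2, e3, e4, e5, e6, e7, e8, e9, e10, e11, e12, e13, e14, e15, e16, e17, e18, e19, e20, e21, e22, e23, e24, e25, e26]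
  have e28 : b 28 = 1275225688247702956601223264782933727191 / 3327383690018166966875178809897779200000000 := by
    rw [hb 28 (by norm_num)]
    simp only [Finset.sum_range_succ, Finset.sum_range_zero]
    norm_num [hb1, e2, e3, e4, e5, e6, e7, e8, e9, e10, e11, e12, e13, e14, e15, e16, e17, e18, e19, e20, e21, e22, e23, e24, e25, e26, e27]
  have e29 : b 29 = 468077496687872184779885915665497019 / 1304089237710431889819783974092800000000 := by
    rw [hb 29 (by norm_num)]
    simp only [Finset.sum_range_succ, Finset.sum_range_zero]
    norm_num [hb1, e2, e3, e4, e5, e6, e7, e8, e9, e10, e11, e12, e13, e14, e15, e16, e17, e18, e19, e20, e21, e22, e23, e24, e25, e26, e27, e28]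
  have f2 : 0 < b 2 ∧ b 2 ≤ 1 / (2 * ((2:ℕ):ℝ)^2) := by norm_num [e2]
  have f3 : 0 < b 3 ∧ b 3 ≤ 1 / (2 * ((3:ℕ):ℝ)^2) := by norm_num [e3]
  have f4 : 0 < b 4 ∧ b 4 ≤ 1 / (2 * ((4:ℕ):ℝ)^2) := by norm_num [e4]
  have f5 : 0 < b 5 ∧ b 5 ≤ 1 / (2 * ((5:ℕ):ℝ)^2) := by norm_num [e5]
  have f6 : 0 < b 6 ∧ b 6 ≤ 1 / (2 * ((6:ℕ):ℝ)^2) := by norm_num [e6]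
  have f7 : 0 < b 7 ∧ b 7 ≤ 1 / (2 * ((7:ℕ):ℝ)^2) := by norm_num [e7]
  have f8 : 0 < b 8 ∧ b 8 ≤ 1 / (2 * ((8:ℕ):ℝ)^2) := by norm_num [e8]
  have f9 : 0 < b 9 ∧ b 9 ≤ 1 / (2 * ((9:ℕ):ℝ)^2) := by norm_num [e9]
  have f10 : 0 < b 10 ∧ b 10 ≤ 1 / (2 * ((10:ℕ):ℝ)^2) := by norm_num [e10]
  have f11 : 0 < b 11 ∧ b 11 ≤ 1 / (2 * ((11:ℕ):ℝ)^2) := by norm_num [e11]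
  have f12 : 0 < b 12 ∧ b 12 ≤ 1 / (2 * ((12:ℕ):ℝ)^2) := by norm_num [e12]
  have f13 : 0 < b 13 ∧ b 13 ≤ 1 / (2 * ((13:ℕ):ℝ)^2) := by norm_num [e13]
  have f14 : 0 < b 14 ∧ b 14 ≤ 1 / (2 * ((14:ℕ):ℝ)^2) := by norm_num [e14]
  have f15 : 0 < b 15 ∧ b 15 ≤ 1 / (2 * ((15:ℕ):ℝ)^2) := by norm_num [e15]
  have f16 : 0 < b 16 ∧ b 16 ≤ 1 / (2 * ((16:ℕ):ℝ)^2) := by norm_num [e16]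
  have f17 : 0 < b 17 ∧ b 17 ≤ 1 / (2 * ((17:ℕ):ℝ)^2) := by norm_num [e17]
  have f18 : 0 < b 18 ∧ b 18 ≤ 1 / (2 * ((18:ℕ):ℝ)^2) := by norm_num [e18]
  have f19 : 0 < b 19 ∧ b 19 ≤ 1 / (2 * ((19:ℕ):ℝ)^2) := by norm_num [e19]
  have f20 : 0 < b 20 ∧ b 20 ≤ 1 / (2 * ((20:ℕ):ℝ)^2) := by norm_num [e20]
  have f21 : 0 < b 21 ∧ b 21 ≤ 1 / (2 * ((21:ℕ):ℝ)^2) := by norm_num [e21]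
  have f22 : 0 < b 22 ∧ b 22 ≤ 1 / (2 * ((22:ℕ):ℝ)^2) := by norm_num [e22]
  have f23 : 0 < b 23 ∧ b 23 ≤ 1 / (2 * ((23:ℕ):ℝ)^2) := by norm_num [e23]
  have f24 : 0 < b 24 ∧ b 24 ≤ 1 / (2 * ((24:ℕ):ℝ)^2) := by norm_num [e24]
  have f25 : 0 < b 25 ∧ b 25 ≤ 1 / (2 * ((25:ℕ):ℝ)^2) := by norm_num [e25]
  have f26 : 0 < b 26 ∧ b 26 ≤ 1 / (2 * ((26:ℕ):ℝ)^2) := by norm_num [e26]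
  have f27 : 0 < b 27 ∧ b 27 ≤ 1 / (2 * ((27:ℕ):ℝ)^2) := by norm_num [e27]
  have f28 : 0 < b 28 ∧ b 28 ≤ 1 / (2 * ((28:ℕ):ℝ)^2) := by norm_num [e28]
  have f29 : 0 < b 29 ∧ b 29 ≤ 1 / (2 * ((29:ℕ):ℝ)^2) := by norm_num [e29]
  intro n h2 h30
  interval_cases n <;> assumption

section BRatio

variable (b : ℕ → ℝ)

lemma key_low
    (hb : ∀ n : ℕ, 2 ≤ n →
      b n = (1 / (n : ℝ)) * (1 / ((n : ℝ) + 1) -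
        ∑ k ∈ Finset.range (n - 1), b (n - k - 1) / ((k : ℝ) + 2)))
    (n : ℕ) (hn : 30 ≤ n)
    (prev : ∀ j : ℕ, 1 ≤ j → j < n → 0 < b j ∧ b j ≤ 1 / (2 * (j:ℝ)^2)) :
    1 / (50 * (n:ℝ)) ≤ (n:ℝ) * b n := by
  have hn2 : 2 ≤ n := by omega
  have hnR : (30:ℝ) ≤ (n:ℝ) := by exact_mod_cast hn
  have hnpos : (0:ℝ) < (n:ℝ) := by linarith
  set M : ℝ := (n:ℝ) + 1 with hM
  have hMpos : (0:ℝ) < M := by positivity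
  have hrec : (n:ℝ) * b n = 1/M - ∑ k ∈ Finset.range (n-1), b (n-k-1) / ((k:ℝ)+2) := by
    rw [hb n hn2]; field_simp; rw [hM]; ring
  -- per-term bound
  have hterm : ∀ k ∈ Finset.range (n-1),
      b (n-k-1) / ((k:ℝ)+2) ≤
        (1/(2*M)) * (1/(((n-1-1-k:ℕ):ℝ)+1)^2) + (1/(2*M^2)) * (1/(((n-1-1-k:ℕ):ℝ)+1))
          + (1/(2*M^2)) * (1/((k:ℝ)+2)) := by
    intro k hk
    rw [Finset.mem_range] at hk
    set i : ℕ := n - k - 1 with hi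
    have hi1 : 1 ≤ i := by omega
    have hi2 : i < n := by omega
    have hic : (i:ℝ) = (n:ℝ) - (k:ℝ) - 1 := by
      have h' : i = n - (k+1) := by omega
      rw [h', Nat.cast_sub (by omega)]; push_cast; ring
    have hjc : ((n-1-1-k:ℕ):ℝ) + 1 = (i:ℝ) := by
      have h' : n-1-1-k = i - 1 := by omega
      rw [h', Nat.cast_sub (by exact_mod_cast hi1)]; push_cast; ring
    rw [hjc]
    have hbi := (prev i hi1 hi2).2
    have hipos : (0:ℝ) < (i:ℝ) := by exact_mod_cast hi1
    have hcpos : (0:ℝ) < (k:ℝ) + 2 := by positivity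
    have hsum : (i:ℝ) + ((k:ℝ)+2) = M := by rw [hic, hM]; ring
    calc b i / ((k:ℝ)+2) ≤ (1/(2*(i:ℝ)^2)) / ((k:ℝ)+2) := by gcongr
    _ = (1/(2*M)) * (1/(i:ℝ)^2) + (1/(2*M^2)) * (1/(i:ℝ)) + (1/(2*M^2)) * (1/((k:ℝ)+2)) := by
        rw [← hsum]
        field_simp
        ring
  -- sum bound
  have hsumle : ∑ k ∈ Finset.range (n-1), b (n-k-1) / ((k:ℝ)+2) ≤
      (1/(2*M)) * (33/20) + (1/(2*M^2)) * (1 + Real.log M) + (1/(2*M^2)) * Real.log M := by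
    have h1 := Finset.sum_le_sum hterm
    rw [Finset.sum_add_distrib, Finset.sum_add_distrib, ← Finset.mul_sum, ← Finset.mul_sum,
      ← Finset.mul_sum] at h1
    have r1 : ∑ k ∈ Finset.range (n-1), (1:ℝ)/(((n-1-1-k:ℕ):ℝ)+1)^2 ≤ 33/20 := by
      rw [Finset.sum_range_reflect (fun j => (1:ℝ)/((j:ℝ)+1)^2) (n-1)]
      exact sum_inv_sq_one (n-1)
    have r2 : ∑ k ∈ Finset.range (n-1), (1:ℝ)/(((n-1-1-k:ℕ):ℝ)+1) ≤ 1 + Real.log M := by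
      rw [Finset.sum_range_reflect (fun j => (1:ℝ)/((j:ℝ)+1)) (n-1)]
      refine le_trans (sum_inv_one_le_log (n-1) (by omega)) ?_
      have : ((n-1:ℕ):ℝ) ≤ M := by
        rw [Nat.cast_sub (by omega)]; push_cast; linarith
      have hlogle := Real.log_le_log (by
        rw [Nat.cast_sub (by omega)]; push_cast; linarith) this
      linarith
    have r3 : ∑ k ∈ Finset.range (n-1), (1:ℝ)/((k:ℝ)+2) ≤ Real.log M := by
      refine le_trans (sum_inv_le_log (n-1)) ?_
      have h' : ((n-1:ℕ):ℝ) + 1 ≤ M := by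
        rw [Nat.cast_sub (by omega)]; push_cast; linarith
      exact Real.log_le_log (by positivity) h'
    have c1 : (0:ℝ) ≤ 1/(2*M) := by positivity
    have c2 : (0:ℝ) ≤ 1/(2*M^2) := by positivity
    calc ∑ k ∈ Finset.range (n-1), b (n-k-1) / ((k:ℝ)+2) ≤ _ := h1
    _ ≤ (1/(2*M)) * (33/20) + (1/(2*M^2)) * (1 + Real.log M) + (1/(2*M^2)) * Real.log M := by
        gcongr
  -- numeric conclusion
  have hlog : Real.log M ≤ M/32 + 247/100 := log_le_lin M (by linarith)
  have hlog0 : 0 ≤ Real.log M := Real.log_nonneg (by linarith)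
  rw [hrec]
  set L := Real.log M with hL
  have e1 : 1/M - (1/(2*M) * (33/20) + 1/(2*M^2) * (1 + L) + 1/(2*M^2) * L)
      = (7*M/40 - (1+2*L)/2)/M^2 := by
    field_simp
    ring
  have e2 : 1/(50*(n:ℝ)) ≤ (7*M/40 - (1+2*L)/2)/M^2 := by
    rw [div_le_div_iff₀ (by positivity) (by positivity)]
    nlinarith [hlog, hlog0, hnR, mul_nonneg (sub_nonneg.2 hnR) hnpos.le,
      mul_nonneg (sub_nonneg.2 hnR) (sub_nonneg.2 hnR)]
  linarith [hsumle, e1, e2]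

lemma key_up (hb1 : b 1 = 1 / 2)
    (hb : ∀ n : ℕ, 2 ≤ n →
      b n = (1 / (n : ℝ)) * (1 / ((n : ℝ) + 1) -
        ∑ k ∈ Finset.range (n - 1), b (n - k - 1) / ((k : ℝ) + 2)))
    (n : ℕ) (hn : 2 ≤ n)
    (prev : ∀ j : ℕ, 1 ≤ j → j < n → 0 < b j) :
    b n ≤ 1 / (2 * (n:ℝ)^2) := by
  have hnR : (2:ℝ) ≤ (n:ℝ) := by exact_mod_cast hn
  have hnpos : (0:ℝ) < (n:ℝ) := by linarith
  have hrec : (n:ℝ) * b n = 1/((n:ℝ)+1) - ∑ k ∈ Finset.range (n-1), b (n-k-1) / ((k:ℝ)+2) := by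
    rw [hb n hn]; field_simp
  have hmem : n - 2 ∈ Finset.range (n-1) := by
    rw [Finset.mem_range]; omega
  have hpos : ∀ k ∈ Finset.range (n-1), 0 ≤ b (n-k-1) / ((k:ℝ)+2) := by
    intro k hk
    rw [Finset.mem_range] at hk
    have h1 : (1:ℕ) ≤ n - k - 1 := by omega
    have h2 : n - k - 1 < n := by omega
    have := prev _ h1 h2
    positivity
  have hsingle := Finset.single_le_sum hpos hmem
  rw [show n - (n-2) - 1 = 1 by omega, hb1] at hsingle
  have hc : ((n-2:ℕ):ℝ) + 2 = (n:ℝ) := by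
    rw [Nat.cast_sub (by omega)]; push_cast; ring
  rw [hc] at hsingle
  have h2 : (n:ℝ) * b n ≤ 1/((n:ℝ)+1) - (1/2)/(n:ℝ) := by linarith [hrec, hsingle]
  have h3 : (n:ℝ) * b n ≤ (n:ℝ) * (1/(2*(n:ℝ)^2)) := by
    have e : (n:ℝ) * (1/(2*(n:ℝ)^2)) = 1/(2*(n:ℝ)) := by field_simp
    rw [e]
    have e2 : 1/((n:ℝ)+1) - (1/2)/(n:ℝ) ≤ 1/(2*(n:ℝ)) := by
      rw [div_sub_div _ _ (by positivity) (by positivity), div_le_div_iff₀ (by positivity) (by positivity)]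
      nlinarith
    linarith
  exact le_of_mul_le_mul_left h3 hnpos

lemma diffT
    (hb : ∀ n : ℕ, 2 ≤ n →
      b n = (1 / (n : ℝ)) * (1 / ((n : ℝ) + 1) -
        ∑ k ∈ Finset.range (n - 1), b (n - k - 1) / ((k : ℝ) + 2)))
    (n : ℕ) (hn : 2 ≤ n) :
    ((n:ℝ)+1) * b (n+1) - (n:ℝ) * b n
      = -(1/(((n:ℝ)+1)*((n:ℝ)+2))) - b n / 2
        + ∑ k ∈ Finset.range (n-1), b (n-k-1) * (1/((k:ℝ)+2) - 1/((k:ℝ)+3)) := by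
  obtain ⟨m, rfl⟩ : ∃ m, n = m + 1 := ⟨n-1, by omega⟩
  have es1 : ∑ x ∈ Finset.range m, b (m+1-x-1) / ((x:ℝ)+2)
      = ∑ x ∈ Finset.range m, b (m-x) / ((x:ℝ)+2) :=
    Finset.sum_congr rfl (fun k _ => by rw [show m+1-k-1 = m-k from by omega])
  have h1 : ((m:ℝ)+1) * b (m+1) = 1/((m:ℝ)+2) - ∑ k ∈ Finset.range m, b (m-k) / ((k:ℝ)+2) := by
    rw [hb (m+1) hn]
    push_cast
    rw [es1]
    field_simp
    ring
  have es2 : ∑ x ∈ Finset.range (m+1), b (m+2-x-1) / ((x:ℝ)+2)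
      = ∑ x ∈ Finset.range (m+1), b (m+1-x) / ((x:ℝ)+2) :=
    Finset.sum_congr rfl (fun k _ => by rw [show m+2-k-1 = m+1-k from by omega])
  have h2 : ((m:ℝ)+2) * b (m+2) = 1/((m:ℝ)+3) - ∑ k ∈ Finset.range (m+1), b (m+1-k) / ((k:ℝ)+2) := by
    rw [hb (m+2) (by omega)]
    push_cast
    rw [es2]
    field_simp
    ring
  have es3 : ∑ k ∈ Finset.range m, b (m+1-(k+1)) / (((k+1:ℕ):ℝ)+2)
      = ∑ k ∈ Finset.range m, b (m-k) / ((k:ℝ)+3) :=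
    Finset.sum_congr rfl (fun k _ => by
      rw [show m+1-(k+1) = m-k from by omega]
      push_cast
      ring_nf)
  have h3 : ∑ k ∈ Finset.range (m+1), b (m+1-k) / ((k:ℝ)+2)
      = b (m+1) / 2 + ∑ k ∈ Finset.range m, b (m-k) / ((k:ℝ)+3) := by
    rw [Finset.sum_range_succ' (fun k => b (m+1-k) / ((k:ℝ)+2)) m]
    rw [es3]
    norm_num
    ring
  have h4 : ∑ k ∈ Finset.range ((m+1)-1), b ((m+1)-k-1) * (1/((k:ℝ)+2) - 1/((k:ℝ)+3))
      = ∑ k ∈ Finset.range m, b (m-k) / ((k:ℝ)+2) - ∑ k ∈ Finset.range m, b (m-k) / ((k:ℝ)+3) := by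
    rw [← Finset.sum_sub_distrib]
    refine Finset.sum_congr (by norm_num) (fun k _ => ?_)
    rw [show m + 1 - k - 1 = m - k from by omega]
    ring
  have h5 : -(1/((((m:ℕ):ℝ)+1+1)*(((m:ℕ):ℝ)+1+2))) = 1/((m:ℝ)+3) - 1/((m:ℝ)+2) := by
    have hp1 : ((m:ℝ)+2) ≠ 0 := by positivity
    have hp2 : ((m:ℝ)+3) ≠ 0 := by positivity
    field_simp
    ring
  push_cast
  push_cast at h4
  linarith [h1, h2, h3, h4, h5]

lemma claimA (hb1 : b 1 = 1 / 2)
    (hb : ∀ n : ℕ, 2 ≤ n →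
      b n = (1 / (n : ℝ)) * (1 / ((n : ℝ) + 1) -
        ∑ k ∈ Finset.range (n - 1), b (n - k - 1) / ((k : ℝ) + 2))) :
    ∀ n : ℕ, 1 ≤ n → 0 < b n ∧ b n ≤ 1 / (2 * (n:ℝ)^2) := by
  intro n
  induction n using Nat.strong_induction_on with
  | _ n ih =>
    intro h1
    rcases eq_or_lt_of_le h1 with h | h
    · rw [← h, hb1]; norm_num
    · have hn2 : 2 ≤ n := h
      by_cases h30 : n < 30
      · exact base_vals b hb1 hb n hn2 h30
      · have hn30 : 30 ≤ n := by omega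
        have prev : ∀ j : ℕ, 1 ≤ j → j < n → 0 < b j ∧ b j ≤ 1/(2*(j:ℝ)^2) :=
          fun j hj1 hjn => ih j hjn hj1
        have hlow := key_low b hb n hn30 prev
        have hnpos : (0:ℝ) < (n:ℝ) := by positivity
        have hprod : (0:ℝ) < (n:ℝ) * b n := lt_of_lt_of_le (by positivity) hlow
        have hbnpos : 0 < b n := by
          by_contra hcon
          push_neg at hcon
          nlinarith
        exact ⟨hbnpos, key_up b hb1 hb n hn2 (fun j hj1 hjn => (prev j hj1 hjn).1)⟩

lemma claimB (hb1 : b 1 = 1 / 2)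
    (hb : ∀ n : ℕ, 2 ≤ n →
      b n = (1 / (n : ℝ)) * (1 / ((n : ℝ) + 1) -
        ∑ k ∈ Finset.range (n - 1), b (n - k - 1) / ((k : ℝ) + 2))) :
    ∀ n : ℕ, 30 ≤ n → 1 / (50 * (n:ℝ)^2) ≤ b n := by
  intro n hn
  have prev : ∀ j : ℕ, 1 ≤ j → j < n → 0 < b j ∧ b j ≤ 1/(2*(j:ℝ)^2) :=
    fun j hj1 _ => claimA b hb1 hb j hj1
  have hlow := key_low b hb n hn prev
  have hnpos : (0:ℝ) < (n:ℝ) := by positivity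
  have e : (n:ℝ) * (1/(50*(n:ℝ)^2)) = 1/(50*(n:ℝ)) := by field_simp
  have : (n:ℝ) * (1/(50*(n:ℝ)^2)) ≤ (n:ℝ) * b n := by rw [e]; exact hlow
  exact le_of_mul_le_mul_left this hnpos

lemma Tbound
    (hb1 : b 1 = 1 / 2)
    (hb : ∀ n : ℕ, 2 ≤ n →
      b n = (1 / (n : ℝ)) * (1 / ((n : ℝ) + 1) -
        ∑ k ∈ Finset.range (n - 1), b (n - k - 1) / ((k : ℝ) + 2)))
    (n : ℕ) (hn : 2 ≤ n) :
    0 ≤ ∑ k ∈ Finset.range (n-1), b (n-k-1) * (1/((k:ℝ)+2) - 1/((k:ℝ)+3)) ∧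
    ∑ k ∈ Finset.range (n-1), b (n-k-1) * (1/((k:ℝ)+2) - 1/((k:ℝ)+3)) ≤ 6/(n:ℝ)^2 := by
  have hA := claimA b hb1 hb
  have hnpos : (0:ℝ) < (n:ℝ) := by positivity
  constructor
  · apply Finset.sum_nonneg
    intro k hk
    rw [Finset.mem_range] at hk
    have h1 : (1:ℕ) ≤ n - k - 1 := by omega
    have hbk := (hA _ h1).1
    have hbr : (0:ℝ) ≤ 1/((k:ℝ)+2) - 1/((k:ℝ)+3) :=
      sub_nonneg.2 (one_div_le_one_div_of_le (by positivity) (by linarith))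
    positivity
  · have hterm : ∀ k ∈ Finset.range (n-1),
        b (n-k-1) * (1/((k:ℝ)+2) - 1/((k:ℝ)+3)) ≤
          2/(n:ℝ)^2 * (1/(((n-1-1-k:ℕ):ℝ)+1)^2) + 2/(n:ℝ)^2 * (1/((k:ℝ)+2)^2) := by
      intro k hk
      rw [Finset.mem_range] at hk
      set i : ℕ := n - k - 1 with hi
      have hi1 : 1 ≤ i := by omega
      have hic : (i:ℝ) = (n:ℝ) - (k:ℝ) - 1 := by
        have h' : i = n - (k+1) := by omega
        rw [h', Nat.cast_sub (by omega)]; push_cast; ring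
      have hjc : ((n-1-1-k:ℕ):ℝ) + 1 = (i:ℝ) := by
        have h' : n-1-1-k = i - 1 := by omega
        rw [h', Nat.cast_sub (by exact_mod_cast hi1)]; push_cast; ring
      rw [hjc]
      have hx1 : (1:ℝ) ≤ (i:ℝ) := by exact_mod_cast hi1
      have hxpos : (0:ℝ) < (i:ℝ) := by linarith
      have hcpos : (0:ℝ) < (k:ℝ) + 2 := by positivity
      have hxc : (i:ℝ) + ((k:ℝ) + 2) = (n:ℝ) + 1 := by rw [hic]; ring
      have hbi := (hA i hi1).2
      have hbr : 1/((k:ℝ)+2) - 1/((k:ℝ)+3) ≤ 1/((k:ℝ)+2)^2 := by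
        rw [div_sub_div _ _ (by positivity) (by positivity)]
        rw [div_le_div_iff₀ (by positivity) (by positivity)]
        nlinarith [sq_nonneg ((k:ℝ))]
      have hbrpos : (0:ℝ) ≤ 1/((k:ℝ)+2) - 1/((k:ℝ)+3) :=
        sub_nonneg.2 (one_div_le_one_div_of_le (by positivity) (by linarith))
      have step1 : b i * (1/((k:ℝ)+2) - 1/((k:ℝ)+3)) ≤ (1/(2*(i:ℝ)^2)) * (1/((k:ℝ)+2)^2) :=
        mul_le_mul hbi hbr hbrpos (by positivity)
      have step2 : (1/(2*(i:ℝ)^2)) * (1/((k:ℝ)+2)^2)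
          ≤ 2/(n:ℝ)^2 * (1/(i:ℝ)^2) + 2/(n:ℝ)^2 * (1/((k:ℝ)+2)^2) := by
        have e : 2/(n:ℝ)^2 * (1/(i:ℝ)^2) + 2/(n:ℝ)^2 * (1/((k:ℝ)+2)^2)
            - (1/(2*(i:ℝ)^2)) * (1/((k:ℝ)+2)^2)
            = (4*((i:ℝ)^2+((k:ℝ)+2)^2) - (n:ℝ)^2)/(2*(n:ℝ)^2*(i:ℝ)^2*((k:ℝ)+2)^2) := by
          field_simp
          ring
        have hnum : (0:ℝ) ≤ 4*((i:ℝ)^2+((k:ℝ)+2)^2) - (n:ℝ)^2 := by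
          nlinarith [sq_nonneg ((i:ℝ)-((k:ℝ)+2)), sq_nonneg ((i:ℝ)+((k:ℝ)+2))]
        have hfrac : (0:ℝ) ≤ (4*((i:ℝ)^2+((k:ℝ)+2)^2) - (n:ℝ)^2)/(2*(n:ℝ)^2*(i:ℝ)^2*((k:ℝ)+2)^2) := by
          positivity
        linarith [e ▸ hfrac]
      exact le_trans step1 step2
    refine le_trans (Finset.sum_le_sum hterm) ?_
    rw [Finset.sum_add_distrib, ← Finset.mul_sum, ← Finset.mul_sum]
    have r1 : ∑ k ∈ Finset.range (n-1), (1:ℝ)/(((n-1-1-k:ℕ):ℝ)+1)^2 ≤ 33/20 := by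
      rw [Finset.sum_range_reflect (fun j => (1:ℝ)/((j:ℝ)+1)^2) (n-1)]
      exact sum_inv_sq_one (n-1)
    have r2 : ∑ k ∈ Finset.range (n-1), (1:ℝ)/((k:ℝ)+2)^2 ≤ 13/20 := sum_inv_sq_two (n-1)
    have c1 : (0:ℝ) ≤ 2/(n:ℝ)^2 := by positivity
    have e0 : (0:ℝ) ≤ 1/(n:ℝ)^2 := by positivity
    have e6 : 2/(n:ℝ)^2 * (33/20) + 2/(n:ℝ)^2 * (13/20) ≤ 6/(n:ℝ)^2 := by
      have ea : 2/(n:ℝ)^2 * (33/20) + 2/(n:ℝ)^2 * (13/20) = (23/5) * (1/(n:ℝ)^2) := by ring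
      have eb : 6/(n:ℝ)^2 = 6 * (1/(n:ℝ)^2) := by ring
      rw [ea, eb]
      nlinarith [e0]
    calc 2/(n:ℝ)^2 * (∑ k ∈ Finset.range (n-1), (1:ℝ)/(((n-1-1-k:ℕ):ℝ)+1)^2)
          + 2/(n:ℝ)^2 * (∑ k ∈ Finset.range (n-1), (1:ℝ)/((k:ℝ)+2)^2)
        ≤ 2/(n:ℝ)^2 * (33/20) + 2/(n:ℝ)^2 * (13/20) := by gcongr
      _ ≤ 6/(n:ℝ)^2 := e6

theorem b_ratio_tendsto_one' (hb1 : b 1 = 1 / 2)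
    (hb : ∀ n : ℕ, 2 ≤ n →
      b n = (1 / (n : ℝ)) * (1 / ((n : ℝ) + 1) -
        ∑ k ∈ Finset.range (n - 1), b (n - k - 1) / ((k : ℝ) + 2))) :
    Filter.Tendsto (fun n : ℕ => b (n + 1) / b n) Filter.atTop (nhds 1) := by
  have key : ∀ n : ℕ, 30 ≤ n → |b (n+1) / b n - 1| ≤ 425 / (n:ℝ) := by
    intro n hn
    have hn2 : 2 ≤ n := by omega
    have hnR : (30:ℝ) ≤ (n:ℝ) := by exact_mod_cast hn
    have hnpos : (0:ℝ) < (n:ℝ) := by linarith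
    have hbn := claimA b hb1 hb n (by omega)
    have hbn1 := claimA b hb1 hb (n+1) (by omega)
    have hlow := claimB b hb1 hb n hn
    have hT := Tbound b hb1 hb n hn2
    have hdiff := diffT b hb n hn2
    -- bound on E := (n+1) b(n+1) - n b n
    have hEub : ((n:ℝ)+1) * b (n+1) - (n:ℝ) * b n ≤ 8/(n:ℝ)^2 := by
      have h1 : (0:ℝ) ≤ 1/(((n:ℝ)+1)*((n:ℝ)+2)) := by positivity
      have h2 : (0:ℝ) ≤ b n / 2 := by linarith [hbn.1]
      have e6 : 6/(n:ℝ)^2 = 6*(1/(n:ℝ)^2) := by ring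
      have e8 : 8/(n:ℝ)^2 = 8*(1/(n:ℝ)^2) := by ring
      have hq : (0:ℝ) ≤ 1/(n:ℝ)^2 := by positivity
      linarith [hdiff, hT.2]
    have hElb : -(8/(n:ℝ)^2) ≤ ((n:ℝ)+1) * b (n+1) - (n:ℝ) * b n := by
      have h1 : 1/(((n:ℝ)+1)*((n:ℝ)+2)) ≤ 1/(n:ℝ)^2 := by
        apply one_div_le_one_div_of_le (by positivity)
        nlinarith
      have h2 : b n / 2 ≤ 1/(4*(n:ℝ)^2) := by
        have := hbn.2
        have e : 1/(2*(n:ℝ)^2)/2 = 1/(4*(n:ℝ)^2) := by ring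
        linarith
      have h3 : 1/(4*(n:ℝ)^2) ≤ 1/(n:ℝ)^2 :=
        one_div_le_one_div_of_le (by positivity) (by nlinarith)
      have e1 : 1/(4*(n:ℝ)^2) = (1/4)*(1/(n:ℝ)^2) := by ring
      have e8 : 8/(n:ℝ)^2 = 8*(1/(n:ℝ)^2) := by ring
      linarith [hdiff, hT.1, h1, h2, h3]
    -- ratio manipulation
    have hbnpos := hbn.1
    have hdenpos : (0:ℝ) < ((n:ℝ)+1) * b n := by positivity
    have e : b (n+1)/b n - 1 = (((n:ℝ)+1)*b (n+1) - ((n:ℝ)+1)*b n)/(((n:ℝ)+1)*b n) := by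
      field_simp
    have hnum : |((n:ℝ)+1)*b (n+1) - ((n:ℝ)+1)*b n| ≤ 17/(2*(n:ℝ)^2) := by
      have idt : ((n:ℝ)+1)*b (n+1) - ((n:ℝ)+1)*b n
          = (((n:ℝ)+1)*b (n+1) - (n:ℝ)*b n) - b n := by ring
      rw [idt]
      rw [abs_le]
      constructor
      · have h5 : b n ≤ 1/(2*(n:ℝ)^2) := hbn.2
        have e1 : 1/(2*(n:ℝ)^2) = (1/2)*(1/(n:ℝ)^2) := by ring
        have e2 : 17/(2*(n:ℝ)^2) = (17/2)*(1/(n:ℝ)^2) := by ring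
        have e8 : 8/(n:ℝ)^2 = 8*(1/(n:ℝ)^2) := by ring
        linarith [hElb]
      · have e2 : 17/(2*(n:ℝ)^2) = (17/2)*(1/(n:ℝ)^2) := by ring
        have e8 : 8/(n:ℝ)^2 = 8*(1/(n:ℝ)^2) := by ring
        have hq : (0:ℝ) ≤ 1/(n:ℝ)^2 := by positivity
        linarith [hEub, hbnpos]
    have hden : ((n:ℝ)+1) * (1/(50*(n:ℝ)^2)) ≤ ((n:ℝ)+1) * b n := by
      have := hlow
      nlinarith
    have hdpos : (0:ℝ) < ((n:ℝ)+1) * (1/(50*(n:ℝ)^2)) := by positivity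
    rw [e, abs_div, abs_of_pos hdenpos]
    have step := div_le_div₀ (by positivity) hnum hdpos hden
    refine le_trans step ?_
    have eq1 : (17/(2*(n:ℝ)^2)) / (((n:ℝ)+1) * (1/(50*(n:ℝ)^2))) = 425/((n:ℝ)+1) := by
      field_simp
      ring
    rw [eq1]
    exact div_le_div_of_nonneg_left (by norm_num) hnpos (by linarith)
  -- squeeze
  have h0 : Filter.Tendsto (fun n:ℕ => (425:ℝ)/(n:ℝ)) Filter.atTop (nhds 0) :=
    tendsto_const_div_atTop_nhds_zero_nat 425
  have h1 : Filter.Tendsto (fun n:ℕ => b (n+1)/b n - 1) Filter.atTop (nhds 0) := by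
    apply squeeze_zero_norm' (Filter.eventually_atTop.2 ⟨30, fun n hn => by
      simpa [Real.norm_eq_abs] using key n hn⟩) h0
  have h2 := h1.add_const 1
  simpa using h2

end BRatio

/-- The sequence of ratios `b (n+1) / b n` converges to `1` as `n → ∞`. -/
theorem b_ratio_tendsto_one (b : ℕ → ℝ) (hb1 : b 1 = 1 / 2)
    (hb : ∀ n : ℕ, 2 ≤ n →
      b n = (1 / (n : ℝ)) * (1 / ((n : ℝ) + 1) -
        ∑ k ∈ Finset.range (n - 1), b (n - k - 1) / ((k : ℝ) + 2))) :
    Filter.Tendsto (fun n : ℕ => b (n + 1) / b n) Filter.atTop (nhds 1) :=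
  b_ratio_tendsto_one' b hb1 hb
end

section
/- For every real x > 0, (1 + 1/x)^x = e·(1 − Σ_{n=1}^∞ b_n/(x+1)^n), i.e. the series Σ_{n=1}^∞ b_n/(x+1)^n converges and equals 1 − (1/e)·(1 + 1/x)^x. -/
open Finset

private lemma bAbs (b : ℕ → ℝ) (hb1 : b 1 = 1 / 2)
    (hb : ∀ n : ℕ, 2 ≤ n →
      b n = (1 / (n : ℝ)) * (1 / ((n : ℝ) + 1) -
        ∑ k ∈ Finset.range (n - 1), b (n - k - 1) / ((k : ℝ) + 2))) :
    ∀ n : ℕ, 1 ≤ n → |b n| ≤ 1 := by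
  intro n
  induction n using Nat.strong_induction_on with
  | _ n ih =>
    intro hn
    rcases eq_or_lt_of_le hn with h1 | h2
    · subst h1; rw [hb1, abs_of_nonneg (by norm_num : (0:ℝ) ≤ 1/2)]; norm_num
    · have hn2 : 2 ≤ n := h2
      have hnR : (2:ℝ) ≤ (n:ℝ) := by exact_mod_cast hn2
      have hS : |∑ k ∈ Finset.range (n - 1), b (n - k - 1) / ((k : ℝ) + 2)|
          ≤ ((n:ℝ) - 1) / 2 := by
        calc |∑ k ∈ Finset.range (n - 1), b (n - k - 1) / ((k : ℝ) + 2)|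
            ≤ ∑ k ∈ Finset.range (n - 1), |b (n - k - 1) / ((k : ℝ) + 2)| :=
              Finset.abs_sum_le_sum_abs _ _
          _ ≤ ∑ k ∈ Finset.range (n - 1), (1:ℝ)/2 := by
              apply Finset.sum_le_sum
              intro k hk
              have hk' : k < n - 1 := Finset.mem_range.1 hk
              have h1le : 1 ≤ n - k - 1 := by omega
              have hlt : n - k - 1 < n := by omega
              have hbk := ih _ hlt h1le
              rw [abs_div]
              have h2k : (2:ℝ) ≤ |(k:ℝ) + 2| := by
                rw [abs_of_nonneg (by positivity)]
                have : (0:ℝ) ≤ (k:ℝ) := Nat.cast_nonneg k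
                linarith
              calc |b (n - k - 1)| / |(k:ℝ) + 2| ≤ 1 / |(k:ℝ) + 2| := by
                    gcongr
                  _ ≤ 1 / 2 := by
                    apply one_div_le_one_div_of_le (by norm_num)
                    linarith
          _ = ((n:ℝ) - 1) / 2 := by
              rw [Finset.sum_const, Finset.card_range]
              have : ((n - 1 : ℕ) : ℝ) = (n:ℝ) - 1 := by
                have := Nat.cast_sub (by omega : 1 ≤ n) (R := ℝ)
                simpa using this
              rw [nsmul_eq_mul, this]; ring
      rw [hb n hn2, abs_mul]
      have h1 : |1 / (n:ℝ)| = 1 / (n:ℝ) := abs_of_nonneg (by positivity)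
      have h2 : |1 / ((n:ℝ) + 1) - ∑ k ∈ Finset.range (n - 1), b (n - k - 1) / ((k : ℝ) + 2)|
          ≤ 1 / ((n:ℝ)+1) + ((n:ℝ)-1)/2 := by
        calc _ ≤ |1 / ((n:ℝ)+1)| + |∑ k ∈ Finset.range (n - 1), b (n - k - 1) / ((k : ℝ) + 2)| :=
              abs_sub _ _
          _ ≤ 1/((n:ℝ)+1) + ((n:ℝ)-1)/2 := by
              rw [abs_of_nonneg (by positivity)]
              linarith
      rw [h1]
      have hnpos : (0:ℝ) < n := by linarith
      have h3 : 1 / ((n:ℝ)+1) + ((n:ℝ)-1)/2 ≤ (n:ℝ) := by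
        have : 1 / ((n:ℝ)+1) ≤ 1/2 := by
          apply one_div_le_one_div_of_le (by norm_num); linarith
        linarith
      calc 1/(n:ℝ) * |_| ≤ 1/(n:ℝ) * (1/((n:ℝ)+1) + ((n:ℝ)-1)/2) := by
            apply mul_le_mul_of_nonneg_left h2 (by positivity)
        _ ≤ 1/(n:ℝ) * (n:ℝ) := by apply mul_le_mul_of_nonneg_left h3 (by positivity)
        _ = 1 := by field_simp

private lemma bRec (b : ℕ → ℝ)
    (hb : ∀ n : ℕ, 2 ≤ n →
      b n = (1 / (n : ℝ)) * (1 / ((n : ℝ) + 1) -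
        ∑ k ∈ Finset.range (n - 1), b (n - k - 1) / ((k : ℝ) + 2))) (n : ℕ) :
    ∑ k ∈ Finset.range (n+1), b (n+1-k) / ((k:ℝ)+2)
      = 1/((n:ℝ)+3) - ((n:ℝ)+2) * b (n+2) := by
  have h := hb (n+2) (by omega)
  have e1 : (n+2) - 1 = n+1 := by omega
  rw [e1] at h
  have e2 : ∑ k ∈ Finset.range (n+1), b (n+2-k-1) / ((k:ℝ)+2)
      = ∑ k ∈ Finset.range (n+1), b (n+1-k) / ((k:ℝ)+2) := by
    apply Finset.sum_congr rfl
    intro k hk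
    have : n+2-k-1 = n+1-k := by omega
    rw [this]
  rw [e2] at h
  have hc : ((n+2:ℕ):ℝ) = (n:ℝ)+2 := by push_cast; ring
  rw [hc] at h
  have hpos : (0:ℝ) < (n:ℝ)+2 := by positivity
  have h3 : ((n:ℝ)+2) + 1 = (n:ℝ)+3 := by ring
  rw [h3] at h
  field_simp at h
  have hne : ((n:ℝ)+3) ≠ 0 := by positivity
  field_simp
  linear_combination h

section sums
variable {b : ℕ → ℝ} {s : ℝ}

private lemma geoAbs (hs : |s| < 1) : Summable fun n : ℕ => |s|^n :=
  summable_geometric_of_lt_one (abs_nonneg s) hs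

private lemma geoAbs1 (hs : |s| < 1) : Summable fun n : ℕ => |s|^(n+1) :=
  ((geoAbs hs).mul_right |s|).congr (fun n => by rw [pow_succ])

private lemma geoAbs2 (hs : |s| < 1) : Summable fun n : ℕ => ((n:ℝ)+2) * |s|^n := by
  have h1 : Summable (fun n : ℕ => (n:ℝ) * |s|^n) := by
    simpa using summable_pow_mul_geometric_of_norm_lt_one (R := ℝ) 1
      (by rwa [Real.norm_eq_abs, abs_abs])
  have h0 := geoAbs hs
  exact (h1.add (h0.mul_left 2)).congr (fun n => by ring)

private lemma sumG_norm (hB : ∀ n : ℕ, 1 ≤ n → |b n| ≤ 1) (hs : |s| < 1) :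
    Summable fun n : ℕ => ‖b (n+1) * s^(n+1)‖ := by
  have hle : ∀ n : ℕ, ‖b (n+1) * s^(n+1)‖ ≤ |s|^(n+1) := by
    intro n
    rw [Real.norm_eq_abs, abs_mul, abs_pow]
    calc |b (n+1)| * |s|^(n+1) ≤ 1 * |s|^(n+1) :=
          mul_le_mul_of_nonneg_right (hB (n+1) (by omega)) (by positivity)
      _ = |s|^(n+1) := one_mul _
  exact Summable.of_nonneg_of_le (fun n => norm_nonneg _) hle (geoAbs1 hs)

private lemma sumW_norm (hs : |s| < 1) :
    Summable fun k : ℕ => ‖s^k / ((k:ℝ)+2)‖ := by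
  have hle : ∀ k : ℕ, ‖s^k / ((k:ℝ)+2)‖ ≤ |s|^k := by
    intro k
    rw [Real.norm_eq_abs, abs_div, abs_pow, abs_of_nonneg (by positivity : (0:ℝ) ≤ (k:ℝ)+2)]
    calc |s|^k / ((k:ℝ)+2) ≤ |s|^k / 1 := by
          apply div_le_div_of_nonneg_left (by positivity) (by norm_num)
          have : (0:ℝ) ≤ (k:ℝ) := Nat.cast_nonneg k
          linarith
      _ = |s|^k := div_one _
  exact Summable.of_nonneg_of_le (fun n => norm_nonneg _) hle (geoAbs hs)

private lemma sumA (hs : |s| < 1) : Summable fun n : ℕ => s^(n+1) / ((n:ℝ)+3) := by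
  apply Summable.of_norm
  have hle : ∀ n : ℕ, ‖s^(n+1) / ((n:ℝ)+3)‖ ≤ |s|^(n+1) := by
    intro n
    rw [Real.norm_eq_abs, abs_div, abs_pow, abs_of_nonneg (by positivity : (0:ℝ) ≤ (n:ℝ)+3)]
    calc |s|^(n+1) / ((n:ℝ)+3) ≤ |s|^(n+1) / 1 := by
          apply div_le_div_of_nonneg_left (by positivity) (by norm_num)
          have : (0:ℝ) ≤ (n:ℝ) := Nat.cast_nonneg n
          linarith
      _ = |s|^(n+1) := div_one _
  exact Summable.of_nonneg_of_le (fun n => norm_nonneg _) hle (geoAbs1 hs)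

private lemma sumB (hB : ∀ n : ℕ, 1 ≤ n → |b n| ≤ 1) (hs : |s| < 1) :
    Summable fun n : ℕ => ((n:ℝ)+2) * b (n+2) * s^(n+1) := by
  apply Summable.of_norm
  have hle : ∀ n : ℕ, ‖((n:ℝ)+2) * b (n+2) * s^(n+1)‖ ≤ (((n:ℝ)+2) * |s|^n) * |s| := by
    intro n
    rw [Real.norm_eq_abs, abs_mul, abs_mul, abs_pow,
      abs_of_nonneg (by positivity : (0:ℝ) ≤ (n:ℝ)+2), pow_succ]
    have h1 : |b (n+2)| ≤ 1 := hB (n+2) (by omega)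
    have h2 : (0:ℝ) ≤ |s|^n * |s| := by positivity
    nlinarith [abs_nonneg (b (n+2)), pow_nonneg (abs_nonneg s) n, abs_nonneg s,
      mul_le_mul_of_nonneg_right h1 h2]
  exact Summable.of_nonneg_of_le (fun n => norm_nonneg _) hle ((geoAbs2 hs).mul_right |s|)

private lemma sumD_norm (hB : ∀ n : ℕ, 1 ≤ n → |b n| ≤ 1) (hs : |s| < 1) :
    Summable fun n : ℕ => ‖((n:ℝ)+1) * b (n+1) * s^n‖ := by
  have hle : ∀ n : ℕ, ‖((n:ℝ)+1) * b (n+1) * s^n‖ ≤ ((n:ℝ)+2) * |s|^n := by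
    intro n
    rw [Real.norm_eq_abs, abs_mul, abs_mul, abs_pow,
      abs_of_nonneg (by positivity : (0:ℝ) ≤ (n:ℝ)+1)]
    have h1 : |b (n+1)| ≤ 1 := hB (n+1) (by omega)
    have h2 : (0:ℝ) ≤ |s|^n := by positivity
    have h3 : (0:ℝ) ≤ (n:ℝ)+1 := by positivity
    nlinarith [abs_nonneg (b (n+1)), mul_le_mul_of_nonneg_right h1 h2,
      mul_le_mul_of_nonneg_left (mul_le_mul_of_nonneg_right h1 h2) h3]
  exact Summable.of_nonneg_of_le (fun n => norm_nonneg _) hle (geoAbs2 hs)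

private lemma keyIdentity (b : ℕ → ℝ) (hb1 : b 1 = 1 / 2)
    (hBrec : ∀ n : ℕ, ∑ k ∈ Finset.range (n+1), b (n+1-k) / ((k:ℝ)+2)
      = 1/((n:ℝ)+3) - ((n:ℝ)+2) * b (n+2))
    (hB : ∀ n : ℕ, 1 ≤ n → |b n| ≤ 1) (hs : |s| < 1) :
    ∑' n : ℕ, (((n:ℝ)+1) * b (n+1) * s^n)
      = (1 - ∑' n : ℕ, b (n+1) * s^(n+1)) * ∑' k : ℕ, s^k / ((k:ℝ)+2) := by
  have hGn := sumG_norm hB hs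
  have hWn := sumW_norm (s := s) hs
  have hA := sumA (s := s) hs
  have hBsum := sumB hB hs
  have hDn := sumD_norm hB hs
  have hprod := tsum_mul_tsum_eq_tsum_sum_range_of_summable_norm hWn hGn
  have hterm : ∀ n : ℕ, (∑ k ∈ Finset.range (n+1),
      (s^k / ((k:ℝ)+2)) * (b ((n-k)+1) * s^((n-k)+1)))
      = s^(n+1) / ((n:ℝ)+3) - ((n:ℝ)+2) * b (n+2) * s^(n+1) := by
    intro n
    have e1 : (∑ k ∈ Finset.range (n+1),
        (s^k / ((k:ℝ)+2)) * (b ((n-k)+1) * s^((n-k)+1)))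
        = ∑ k ∈ Finset.range (n+1), s^(n+1) * (b (n+1-k) / ((k:ℝ)+2)) := by
      apply Finset.sum_congr rfl
      intro k hk
      have hkn : k ≤ n := by
        have := Finset.mem_range.1 hk; omega
      have e2 : (n-k)+1 = n+1-k := by omega
      have e3 : s^(n+1) = s^k * s^(n+1-k) := by
        rw [← pow_add]; congr 1; omega
      rw [e2, e3]; ring
    rw [e1, ← Finset.mul_sum, hBrec n]
    ring
  have hP : ((∑' k : ℕ, s^k / ((k:ℝ)+2)) * ∑' n : ℕ, b (n+1) * s^(n+1))
      = (∑' n : ℕ, s^(n+1) / ((n:ℝ)+3)) - ∑' n : ℕ, ((n:ℝ)+2) * b (n+2) * s^(n+1) := by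
    rw [hprod, ← Summable.tsum_sub hA hBsum]
    exact tsum_congr hterm
  have hD : Summable fun n : ℕ => ((n:ℝ)+1) * b (n+1) * s^n := hDn.of_norm
  have hL : ∑' n : ℕ, (((n:ℝ)+1) * b (n+1) * s^n)
      = 1/2 + ∑' n : ℕ, ((n:ℝ)+2) * b (n+2) * s^(n+1) := by
    rw [Summable.tsum_eq_zero_add hD]
    congr 1
    · simp [hb1]
    · apply tsum_congr
      intro n
      push_cast
      ring
  have hW : ∑' k : ℕ, s^k / ((k:ℝ)+2)
      = 1/2 + ∑' n : ℕ, s^(n+1) / ((n:ℝ)+3) := by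
    rw [Summable.tsum_eq_zero_add hWn.of_norm]
    congr 1
    · norm_num
    · apply tsum_congr
      intro n
      push_cast
      ring
  rw [hL, sub_mul, one_mul, mul_comm (∑' n : ℕ, b (n+1) * s^(n+1)) _, hP, hW]
  ring

end sums

/-- For every real `x > 0`, the series `Σ_{n=1}^∞ b n/(x+1)^n` converges and equals
`1 − (1/e)·(1 + 1/x)^x`, i.e. `(1 + 1/x)^x = e·(1 − Σ_{n=1}^∞ b n/(x+1)^n)`. -/
theorem hasSum_b_div_pow (b : ℕ → ℝ) (hb1 : b 1 = 1 / 2)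
    (hb : ∀ n : ℕ, 2 ≤ n →
      b n = (1 / (n : ℝ)) * (1 / ((n : ℝ) + 1) -
        ∑ k ∈ Finset.range (n - 1), b (n - k - 1) / ((k : ℝ) + 2)))
    (x : ℝ) (hx : 0 < x) :
    HasSum (fun n : ℕ => b (n + 1) / (x + 1) ^ (n + 1))
      (1 - (1 / Real.exp 1) * (1 + 1 / x) ^ x) := by
  have hB := bAbs b hb1 hb
  have hBrec := bRec b hb
  have hx1 : (0:ℝ) < x + 1 := by linarith
  set t : ℝ := 1/(x+1) with htdef
  have ht0 : 0 < t := by positivity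
  have ht1 : t < 1 := by
    rw [htdef, div_lt_one hx1]; linarith
  set r : ℝ := (1+t)/2 with hrdef
  have htr : t < r := by rw [hrdef]; linarith
  have hr1 : r < 1 := by rw [hrdef]; linarith
  have hr0 : 0 < r := by rw [hrdef]; linarith
  have hmem : ∀ s : ℝ, s ∈ Metric.ball (0:ℝ) r → |s| < 1 := by
    intro s hs
    rw [Metric.mem_ball, dist_zero_right, Real.norm_eq_abs] at hs
    linarith
  set g : ℝ → ℝ := fun s => ∑' n : ℕ, b (n+1) * s^(n+1) with hgdef
  set V : ℝ → ℝ := fun s => ∑' k : ℕ, s^(k+1) / (((k:ℝ)+1)*((k:ℝ)+2)) with hVdef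
  have hg_apply : ∀ s : ℝ, g s = ∑' n : ℕ, b (n+1) * s^(n+1) := fun s => by rw [hgdef]
  -- derivative of g on the ball
  have hu2 : Summable fun n : ℕ => ((n:ℝ)+2) * r^n := by
    have := geoAbs2 (s := r) (by rwa [abs_of_pos hr0])
    rwa [abs_of_pos hr0] at this
  have hgderiv : ∀ s ∈ Metric.ball (0:ℝ) r,
      HasDerivAt g (∑' n : ℕ, (((n:ℝ)+1) * b (n+1) * s^n)) s := by
    intro s hs
    rw [hgdef]
    apply hasDerivAt_tsum_of_isPreconnected hu2 Metric.isOpen_ball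
      (convex_ball (0:ℝ) r).isPreconnected
      (g := fun (n : ℕ) (y : ℝ) => b (n+1) * y^(n+1))
      (g' := fun (n : ℕ) (y : ℝ) => ((n:ℝ)+1) * b (n+1) * y^n)
      (y₀ := 0) ?_ ?_ (Metric.mem_ball_self hr0) ?_ hs
    · intro n y hy
      have h := (hasDerivAt_pow (n+1) y).const_mul (b (n+1))
      refine h.congr_deriv ?_
      simp only [Nat.add_sub_cancel]
      push_cast
      ring
    · intro n y hy
      have hy1 : |y| < r := by
        rw [Metric.mem_ball, dist_zero_right, Real.norm_eq_abs] at hy; exact hy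
      rw [Real.norm_eq_abs, abs_mul, abs_mul, abs_pow,
        abs_of_nonneg (by positivity : (0:ℝ) ≤ (n:ℝ)+1)]
      have h1 : |b (n+1)| ≤ 1 := hB (n+1) (by omega)
      have h2 : |y|^n ≤ r^n := pow_le_pow_left₀ (abs_nonneg y) hy1.le n
      have h3 : (0:ℝ) ≤ |y|^n := by positivity
      nlinarith [abs_nonneg (b (n+1)), pow_nonneg hr0.le n,
        mul_le_mul_of_nonneg_right h1 h3]
    · exact summable_zero.congr (fun n => by simp)
  -- derivative of V on the ball
  have hu1 : Summable fun k : ℕ => r^k := summable_geometric_of_lt_one hr0.le hr1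
  have hVderiv : ∀ s ∈ Metric.ball (0:ℝ) r,
      HasDerivAt V (∑' k : ℕ, s^k / ((k:ℝ)+2)) s := by
    intro s hs
    rw [hVdef]
    apply hasDerivAt_tsum_of_isPreconnected hu1 Metric.isOpen_ball
      (convex_ball (0:ℝ) r).isPreconnected
      (g := fun (k : ℕ) (y : ℝ) => y^(k+1) / (((k:ℝ)+1)*((k:ℝ)+2)))
      (g' := fun (k : ℕ) (y : ℝ) => y^k / ((k:ℝ)+2))
      (y₀ := 0) ?_ ?_ (Metric.mem_ball_self hr0) ?_ hs
    · intro k y hy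
      have h := (hasDerivAt_pow (k+1) y).div_const (((k:ℝ)+1)*((k:ℝ)+2))
      refine h.congr_deriv ?_
      simp only [Nat.add_sub_cancel]
      have hk1 : ((k:ℝ)+1) ≠ 0 := by positivity
      have hk2 : ((k:ℝ)+2) ≠ 0 := by positivity
      push_cast
      field_simp
    · intro k y hy
      have hy1 : |y| < r := by
        rw [Metric.mem_ball, dist_zero_right, Real.norm_eq_abs] at hy; exact hy
      rw [Real.norm_eq_abs, abs_div, abs_pow,
        abs_of_nonneg (by positivity : (0:ℝ) ≤ (k:ℝ)+2)]
      have h2 : |y|^k ≤ r^k := pow_le_pow_left₀ (abs_nonneg y) hy1.le k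
      have h4 : |y|^k / ((k:ℝ)+2) ≤ |y|^k := by
        apply div_le_self (by positivity)
        have : (0:ℝ) ≤ (k:ℝ) := Nat.cast_nonneg k
        linarith
      linarith
    · exact summable_zero.congr (fun k => by simp)
  -- phi is constant
  set φ : ℝ → ℝ := fun s => (1 - g s) * Real.exp (V s) with hφdef
  have hφderiv : ∀ s ∈ Metric.ball (0:ℝ) r, HasDerivAt φ 0 s := by
    intro s hs
    have h1 := hgderiv s hs
    have h2 := hVderiv s hs
    have h3 : HasDerivAt (fun y => 1 - g y)
        (-(∑' n : ℕ, (((n:ℝ)+1) * b (n+1) * s^n))) s := by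
      exact h1.const_sub 1
    have h4 := h2.exp
    have h5 := h3.mul h4
    rw [hφdef]
    refine h5.congr_deriv ?_
    rw [keyIdentity b hb1 hBrec hB (hmem s hs), ← hg_apply s]
    ring
  have hsub : Set.Icc (0:ℝ) t ⊆ Metric.ball (0:ℝ) r := by
    intro y hy
    rw [Metric.mem_ball, dist_zero_right, Real.norm_eq_abs]
    rcases hy with ⟨hy1, hy2⟩
    rw [abs_of_nonneg hy1]; linarith
  have hconst : φ t = φ 0 :=
    constant_of_has_deriv_right_zero
      (fun y hy => (hφderiv y (hsub hy)).continuousAt.continuousWithinAt)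
      (fun y hy => (hφderiv y (hsub (Set.Ico_subset_Icc_self hy))).hasDerivWithinAt)
      t (Set.right_mem_Icc.2 ht0.le)
  have hg0 : g 0 = 0 := by
    rw [hgdef]; simp
  have hV0 : V 0 = 0 := by
    rw [hVdef]; simp
  have hval : (1 - g t) * Real.exp (V t) = 1 := by
    have h0 : φ 0 = 1 := by rw [hφdef]; simp [hg0, hV0]
    calc (1 - g t) * Real.exp (V t) = φ t := by rw [hφdef]
      _ = φ 0 := hconst
      _ = 1 := h0
  have hgt : 1 - g t = Real.exp (-(V t)) := by
    have he : Real.exp (V t) ≠ 0 := Real.exp_ne_zero _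
    rw [Real.exp_neg]
    field_simp
    linear_combination hval
  -- closed form of V t
  have habs : |t| < 1 := by rw [abs_of_pos ht0]; exact ht1
  have h1 : HasSum (fun n : ℕ => t^(n+1)/((n:ℝ)+1)) (-Real.log (1-t)) :=
    Real.hasSum_pow_div_log_of_abs_lt_one habs
  have h2 : HasSum (fun n : ℕ => t^(n+2)/((n:ℝ)+2)) (-Real.log (1-t) - t) := by
    have h := (hasSum_nat_add_iff' (f := fun n : ℕ => t^(n+1)/((n:ℝ)+1)) 1).2 h1
    simp only [Finset.range_one, Finset.sum_singleton] at h
    have hfe : (fun n : ℕ => t^(n+1+1)/((↑(n+1):ℝ)+1)) = fun n : ℕ => t^(n+2)/((n:ℝ)+2) := by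
      funext n; push_cast; ring_nf
    rw [hfe] at h
    simpa using h
  have h3 : HasSum (fun k : ℕ => t^(k+1)/((k:ℝ)+2)) ((-Real.log (1-t) - t)/t) := by
    have h := h2.div_const t
    have hfe : (fun k : ℕ => t^(k+2)/((k:ℝ)+2)/t) = fun k : ℕ => t^(k+1)/((k:ℝ)+2) := by
      funext k
      have hk2 : ((k:ℝ)+2) ≠ 0 := by positivity
      field_simp
      ring
    rwa [hfe] at h
  have h4 := h1.sub h3
  have hVt : V t = -Real.log (1-t) - (-Real.log (1-t) - t)/t := by
    rw [hVdef]
    have hfe : (fun k : ℕ => t^(k+1)/((k:ℝ)+1) - t^(k+1)/((k:ℝ)+2))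
        = fun k : ℕ => t^(k+1) / (((k:ℝ)+1)*((k:ℝ)+2)) := by
      funext k
      have hk1 : ((k:ℝ)+1) ≠ 0 := by positivity
      have hk2 : ((k:ℝ)+2) ≠ 0 := by positivity
      field_simp
      ring
    have hres : (∑' k : ℕ, t^(k+1) / (((k:ℝ)+1)*((k:ℝ)+2)))
        = -Real.log (1-t) - (-Real.log (1-t) - t)/t := by
      rw [← hfe]
      exact h4.tsum_eq
    exact hres
  -- assemble
  have hsumt : HasSum (fun n : ℕ => b (n+1) * t^(n+1)) (g t) := by
    rw [hg_apply t]
    exact (sumG_norm hB habs).of_norm.hasSum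
  have hfun : (fun n : ℕ => b (n + 1) / (x + 1) ^ (n + 1))
      = fun n : ℕ => b (n+1) * t^(n+1) := by
    funext n
    rw [htdef, div_pow, one_pow, mul_one_div]
  have hbase : (0:ℝ) < 1 + 1/x := by positivity
  have hLx : Real.log (1+1/x) = -Real.log (1-t) := by
    have h1t : 1 - t = x/(x+1) := by
      rw [htdef]; field_simp; ring
    have hb2 : 1 + 1/x = (x/(x+1))⁻¹ := by
      rw [inv_div]; field_simp
    rw [h1t, hb2, Real.log_inv]
  have hexp : Real.exp (-(V t)) = (1/Real.exp 1) * (1+1/x)^x := by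
    rw [Real.rpow_def_of_pos hbase, one_div, ← Real.exp_neg, ← Real.exp_add]
    congr 1
    rw [hVt, hLx, htdef]
    have hne : x + 1 ≠ 0 := by positivity
    field_simp
    ring
  have hfinal : g t = 1 - (1/Real.exp 1) * (1+1/x)^x := by
    rw [← hexp, ← hgt]; ring
  rw [hfun]
  exact hfinal ▸ hsumt
end

section
/- The series Σ_{n=1}^∞ b_n converges and Σ_{n=1}^∞ b_n = 1 − 1/e. -/
open Finset
set_option maxHeartbeats 1000000


noncomputable def vv : ℕ → ℝ := fun m => if m = 0 then 0 else 1 / (m * (m + 1))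

noncomputable def gg : ℕ → ℕ → ℝ
  | 0, n => if n = 0 then 1 else 0
  | (k+1), n => ∑ m ∈ Finset.range (n+1), vv m * gg k (n - m)

lemma gg_succ (k n : ℕ) : gg (k+1) n = ∑ m ∈ Finset.range (n+1), vv m * gg k (n - m) := rfl

lemma vv_nonneg (m : ℕ) : 0 ≤ vv m := by
  unfold vv; split <;> positivity

lemma gg_nonneg (k n : ℕ) : 0 ≤ gg k n := by
  induction k generalizing n with
  | zero => unfold gg; split <;> norm_num
  | succ k ih =>
    unfold gg
    exact Finset.sum_nonneg fun m _ => mul_nonneg (vv_nonneg m) (ih _)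

lemma gg_eq_zero {k n : ℕ} (h : n < k) : gg k n = 0 := by
  induction k generalizing n with
  | zero => omega
  | succ k ih =>
    unfold gg
    apply Finset.sum_eq_zero
    intro m hm
    simp only [Finset.mem_range] at hm
    rcases Nat.eq_zero_or_pos m with hm0 | hm0
    · simp [hm0, vv]
    · rw [ih (by omega), mul_zero]

lemma sum_vv (n : ℕ) : ∑ m ∈ Finset.range (n+1), vv m = 1 - 1/(n+1) := by
  induction n with
  | zero => simp [vv]
  | succ n ih =>
    rw [Finset.sum_range_succ, ih]
    have h1 : ((n:ℝ)+1) ≠ 0 := by positivity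
    have h2 : ((n:ℝ)+2) ≠ 0 := by positivity
    simp only [vv, Nat.succ_ne_zero, if_false]
    push_cast
    field_simp
    ring

lemma hasSum_vv : HasSum vv 1 := by
  rw [hasSum_iff_tendsto_nat_of_nonneg vv_nonneg]
  have h : ∀ n : ℕ, ∑ m ∈ Finset.range (n+1), vv m = 1 - 1/(n+1) := sum_vv
  have : Filter.Tendsto (fun n : ℕ => 1 - 1/((n:ℝ)+1)) Filter.atTop (nhds 1) := by
    have := tendsto_one_div_add_atTop_nhds_zero_nat (𝕜 := ℝ)
    simpa using Filter.Tendsto.const_sub 1 this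
  have h2 : Filter.Tendsto (fun n : ℕ => ∑ m ∈ Finset.range (n+1), vv m) Filter.atTop (nhds 1) := by
    simpa only [h] using this
  exact (Filter.tendsto_add_atTop_iff_nat 1).mp h2

lemma hasSum_gg (k : ℕ) : HasSum (gg k) 1 := by
  induction k with
  | zero => exact hasSum_ite_eq 0 1
  | succ k ih =>
    have hv : Summable fun m => ‖vv m‖ := by
      refine hasSum_vv.summable.congr fun m => ?_
      rw [Real.norm_eq_abs, abs_of_nonneg (vv_nonneg m)]
    have hg : Summable fun n => ‖gg k n‖ := by
      refine ih.summable.congr fun n => ?_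
      rw [Real.norm_eq_abs, abs_of_nonneg (gg_nonneg k n)]
    have hsum : Summable (gg (k+1)) := by
      have := (summable_norm_sum_mul_range_of_summable_norm hv hg).of_norm
      refine this.congr fun n => ?_
      simp [gg]
    have ht : ∑' n, gg (k+1) n = 1 := by
      have := tsum_mul_tsum_eq_tsum_sum_range_of_summable_norm hv hg
      rw [hasSum_vv.tsum_eq, ih.tsum_eq] at this
      rw [show (gg (k+1)) = fun n => ∑ m ∈ Finset.range (n+1), vv m * gg k (n - m) from rfl]
      rw [← this]; norm_num
    exact ht ▸ hsum.hasSum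


lemma tri1 (G : ℕ → ℝ) {m n : ℕ} (h : m ≤ n) :
    ∑ r ∈ Finset.range (n+1-m), G r = ∑ r ∈ Finset.range (n+1), if m + r ≤ n then G r else 0 := by
  rw [Finset.sum_ite, Finset.sum_const_zero, add_zero]
  apply Finset.sum_congr _ (fun _ _ => rfl)
  ext r
  simp only [Finset.mem_filter, Finset.mem_range]
  omega

lemma tri (F : ℕ → ℕ → ℝ) (n : ℕ) :
    ∑ m ∈ Finset.range (n+1), ∑ r ∈ Finset.range (n+1-m), F m r
      = ∑ r ∈ Finset.range (n+1), ∑ m ∈ Finset.range (n+1-r), F m r := by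
  have l : ∑ m ∈ Finset.range (n+1), ∑ r ∈ Finset.range (n+1-m), F m r
      = ∑ m ∈ Finset.range (n+1), ∑ r ∈ Finset.range (n+1), if m + r ≤ n then F m r else 0 :=
    Finset.sum_congr rfl fun m hm => tri1 _ (by simpa using Nat.lt_succ_iff.mp (Finset.mem_range.mp hm))
  have r : ∑ r ∈ Finset.range (n+1), ∑ m ∈ Finset.range (n+1-r), F m r
      = ∑ r ∈ Finset.range (n+1), ∑ m ∈ Finset.range (n+1), if r + m ≤ n then F m r else 0 :=
    Finset.sum_congr rfl fun r hr => tri1 _ (by simpa using Nat.lt_succ_iff.mp (Finset.mem_range.mp hr))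
  rw [l, r, Finset.sum_comm]
  refine Finset.sum_congr rfl fun m _ => Finset.sum_congr rfl fun r _ => ?_
  rw [Nat.add_comm]



lemma gg_deriv (k : ℕ) : ∀ n : ℕ, (n:ℝ) * gg (k+1) n
    = (k+1) * ∑ m ∈ Finset.range (n+1), ((m:ℝ) * vv m) * gg k (n - m) := by
  induction k with
  | zero =>
    intro n
    have h1 : gg 1 n = vv n := by
      rw [gg_succ, Finset.sum_eq_single n]
      · simp [gg]
      · intro m hm hne
        have : n - m ≠ 0 := by simp at hm; omega
        simp [gg, this]
      · simp
    have h2 : ∑ m ∈ Finset.range (n+1), ((m:ℝ) * vv m) * gg 0 (n - m) = (n:ℝ) * vv n := by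
      rw [Finset.sum_eq_single n]
      · simp [gg]
      · intro m hm hne
        have : n - m ≠ 0 := by simp at hm; omega
        simp [gg, this]
      · simp
    rw [h1, h2]
    norm_num
  | succ k ih =>
    intro n
    have expand : (n:ℝ) * gg (k+2) n
        = ∑ m ∈ Finset.range (n+1), ((m:ℝ) * vv m) * gg (k+1) (n - m)
          + ∑ m ∈ Finset.range (n+1), vv m * (((n - m : ℕ):ℝ) * gg (k+1) (n - m)) := by
      rw [show gg (k+2) n = ∑ m ∈ Finset.range (n+1), vv m * gg (k+1) (n - m) from rfl]
      rw [Finset.mul_sum, ← Finset.sum_add_distrib]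
      refine Finset.sum_congr rfl fun m hm => ?_
      have hmn : m ≤ n := Nat.lt_succ_iff.mp (Finset.mem_range.mp hm)
      rw [Nat.cast_sub hmn]
      ring
    rw [expand]
    have step1 : ∀ m, vv m * (((n - m : ℕ):ℝ) * gg (k+1) (n - m))
        = (k+1) * ∑ r ∈ Finset.range ((n-m)+1), vv m * (((r:ℝ) * vv r) * gg k (n - m - r)) := by
      intro m
      rw [show vv m * (((n - m : ℕ):ℝ) * gg (k+1) (n - m))
            = vv m * (((n - m : ℕ):ℝ) * gg (k+1) (n - m)) from rfl]
      rw [ih (n - m)]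
      simp only [Finset.mul_sum]
      exact Finset.sum_congr rfl fun r _ => by ring
    have second : ∑ m ∈ Finset.range (n+1), vv m * (((n - m : ℕ):ℝ) * gg (k+1) (n - m))
        = (k+1) * ∑ r ∈ Finset.range (n+1), ((r:ℝ) * vv r) * gg (k+1) (n - r) := by
      calc ∑ m ∈ Finset.range (n+1), vv m * (((n - m : ℕ):ℝ) * gg (k+1) (n - m))
          = (k+1) * ∑ m ∈ Finset.range (n+1), ∑ r ∈ Finset.range (n+1-m),
              vv m * (((r:ℝ) * vv r) * gg k (n - m - r)) := by
            rw [Finset.mul_sum]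
            refine Finset.sum_congr rfl fun m hm => ?_
            have hmn : m ≤ n := Nat.lt_succ_iff.mp (Finset.mem_range.mp hm)
            rw [step1 m, show n + 1 - m = (n - m) + 1 by omega]
        _ = (k+1) * ∑ r ∈ Finset.range (n+1), ∑ m ∈ Finset.range (n+1-r),
              vv m * (((r:ℝ) * vv r) * gg k (n - r - m)) := by
            rw [tri (fun m r => vv m * (((r:ℝ) * vv r) * gg k (n - m - r)))]
            congr 1
            refine Finset.sum_congr rfl fun r _ => Finset.sum_congr rfl fun m _ => ?_
            rw [show n - m - r = n - r - m by omega]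
        _ = (k+1) * ∑ r ∈ Finset.range (n+1), ((r:ℝ) * vv r) * gg (k+1) (n - r) := by
            congr 1
            refine Finset.sum_congr rfl fun r hr => ?_
            have hrn : r ≤ n := Nat.lt_succ_iff.mp (Finset.mem_range.mp hr)
            rw [gg_succ k (n - r), show n + 1 - r = (n - r) + 1 by omega, Finset.mul_sum]
            refine Finset.sum_congr rfl fun m _ => ?_
            ring
    rw [second]
    push_cast
    ring


noncomputable def ff : ℕ → ℝ :=
  fun n => ∑ k ∈ Finset.range (n+1), (-1:ℝ)^k / (Nat.factorial k) * gg k n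


lemma ff_zero : ff 0 = 1 := by simp [ff, gg]

lemma ff_tail {n N : ℕ} (h : n ≤ N) :
    ∑ k ∈ Finset.range (N+1), (-1:ℝ)^k / (Nat.factorial k) * gg k n = ff n := by
  rw [ff]
  symm
  apply Finset.sum_subset
  · exact Finset.range_subset_range.mpr (by omega)
  · intro k hk hk2
    simp only [Finset.mem_range] at hk hk2
    rw [gg_eq_zero (by omega), mul_zero]

lemma ff_rec {n : ℕ} (hn : 1 ≤ n) :
    (n:ℝ) * ff n = -∑ m ∈ Finset.range (n+1), ((m:ℝ) * vv m) * ff (n - m) := by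
  have expand : (n:ℝ) * ff n
      = ∑ k ∈ Finset.range (n+1), (-1:ℝ)^k / (Nat.factorial k) * ((n:ℝ) * gg k n) := by
    rw [ff, Finset.mul_sum]
    exact Finset.sum_congr rfl fun k _ => by ring
  rw [expand, Finset.sum_range_succ']
  have h0 : (-1:ℝ)^0 / (Nat.factorial 0) * ((n:ℝ) * gg 0 n) = 0 := by
    have : gg 0 n = 0 := by simp [gg]; omega
    simp [this]
  rw [h0, add_zero]
  have hterm : ∀ k, (-1:ℝ)^(k+1) / (Nat.factorial (k+1)) * ((n:ℝ) * gg (k+1) n)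
      = -((-1:ℝ)^k / (Nat.factorial k) * ∑ m ∈ Finset.range (n+1), ((m:ℝ) * vv m) * gg k (n - m)) := by
    intro k
    rw [gg_deriv k n]
    rw [pow_succ, Nat.factorial_succ]
    have hk : ((Nat.factorial k : ℝ)) ≠ 0 := by positivity
    push_cast
    field_simp
  rw [Finset.sum_congr rfl fun k _ => hterm k]
  rw [Finset.sum_neg_distrib, neg_inj]
  have swap : ∑ k ∈ Finset.range n, (-1:ℝ)^k / (Nat.factorial k)
        * ∑ m ∈ Finset.range (n+1), ((m:ℝ) * vv m) * gg k (n - m)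
      = ∑ m ∈ Finset.range (n+1), ∑ k ∈ Finset.range n,
        ((m:ℝ) * vv m) * ((-1:ℝ)^k / (Nat.factorial k) * gg k (n - m)) := by
    rw [Finset.sum_comm]
    refine Finset.sum_congr rfl fun k _ => ?_
    rw [Finset.mul_sum]
    exact Finset.sum_congr rfl fun m _ => by ring
  rw [swap]
  refine Finset.sum_congr rfl fun m hm => ?_
  rcases Nat.eq_zero_or_pos m with h | h
  · subst h; simp [vv]
  · rw [← Finset.mul_sum]
    congr 1
    have htl := ff_tail (n := n - m) (N := n - 1) (by omega)
    rw [show (n-1)+1 = n by omega] at htl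
    exact htl

lemma bb_eq (b : ℕ → ℝ) (hb1 : b 1 = 1 / 2)
    (hb : ∀ n : ℕ, 2 ≤ n →
      b n = (1 / (n : ℝ)) * (1 / ((n : ℝ) + 1) -
        ∑ k ∈ Finset.range (n - 1), b (n - k - 1) / ((k : ℝ) + 2))) :
    ∀ n : ℕ, 1 ≤ n → b n = -ff n := by
  intro n
  induction n using Nat.strong_induction_on with
  | _ n ih =>
    intro hn
    rcases eq_or_lt_of_le hn with h1 | h2
    · have : n = 1 := h1.symm
      subst this
      have hf1 : ff 1 = -(1/2) := by
        norm_num [ff, gg, Finset.sum_range_succ, vv]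
      rw [hb1, hf1]; norm_num
    · -- n ≥ 2
      have hn2 : 2 ≤ n := h2
      have hnn : ((n:ℝ)) ≠ 0 := by positivity
      have hrec := ff_rec (by omega : 1 ≤ n)
      rw [Finset.sum_range_succ] at hrec
      have hlast : ((n:ℝ) * vv n) * ff (n - n) = 1/((n:ℝ)+1) := by
        rw [Nat.sub_self, ff_zero, mul_one]
        have hne : n ≠ 0 := by omega
        simp only [vv, hne, if_false]
        field_simp
      rw [hlast] at hrec
      have hsplit : ∑ m ∈ Finset.range n, ((m:ℝ) * vv m) * ff (n - m)
          = ∑ k ∈ Finset.range (n-1), (((k+1:ℕ):ℝ) * vv (k+1)) * ff (n - (k+1)) := by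
        have h' := Finset.sum_range_succ' (fun m => ((m:ℝ) * vv m) * ff (n - m)) (n-1)
        rw [show (n-1)+1 = n by omega] at h'
        rw [h']
        simp [vv]
      rw [hsplit] at hrec
      have hterm : ∀ k ∈ Finset.range (n-1),
          (((k+1:ℕ):ℝ) * vv (k+1)) * ff (n - (k+1)) = -(b (n - k - 1) / ((k:ℝ)+2)) := by
        intro k hk
        simp only [Finset.mem_range] at hk
        have h1' : 1 ≤ n - (k+1) := by omega
        have h2' : n - (k+1) < n := by omega
        have hbk := ih (n - (k+1)) h2' h1'
        rw [show n - (k+1) = n - k - 1 from by omega] at hbk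
        rw [show n - (k+1) = n - k - 1 from by omega, show ff (n - k - 1) = -b (n - k - 1) by rw [hbk]; ring]
        have hv : vv (k+1) = 1/(((k:ℝ)+1)*((k:ℝ)+2)) := by
          simp only [vv, Nat.succ_ne_zero, if_false]
          push_cast; ring_nf
        rw [hv]
        have hk1 : ((k:ℝ)+1) ≠ 0 := by positivity
        have hk2 : ((k:ℝ)+2) ≠ 0 := by positivity
        push_cast
        field_simp
      rw [Finset.sum_congr rfl hterm, Finset.sum_neg_distrib] at hrec
      have hbn : (n:ℝ) * b n
          = 1/((n:ℝ)+1) - ∑ k ∈ Finset.range (n-1), b (n - k - 1)/((k:ℝ)+2) := by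
        rw [hb n hn2]; field_simp
      apply mul_left_cancel₀ hnn
      rw [hbn]
      linarith [hrec]



noncomputable def TT : ℕ × ℕ → ℝ :=
  fun p => (-1:ℝ)^p.1 / (Nat.factorial p.1) * gg p.1 p.2

lemma summable_TT : Summable TT := by
  apply Summable.of_norm
  have hnorm : ∀ p : ℕ × ℕ, ‖TT p‖ = (1 / (Nat.factorial p.1)) * gg p.1 p.2 := by
    intro p
    rw [Real.norm_eq_abs, TT, abs_mul, abs_div, abs_pow, abs_neg, abs_one, one_pow,
      abs_of_nonneg (gg_nonneg _ _), Nat.abs_cast]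
  set F : ℕ × ℕ → ℝ := fun p => (1 / (Nat.factorial p.1 : ℝ)) * gg p.1 p.2 with hF
  have key : Summable F := by
    have hpos : 0 ≤ F := fun p => mul_nonneg (by positivity) (gg_nonneg _ _)
    refine (summable_prod_of_nonneg hpos).mpr ⟨fun k => ?_, ?_⟩
    · exact ((hasSum_gg k).mul_left (1 / (Nat.factorial k : ℝ))).summable
    · apply Summable.congr (Real.summable_pow_div_factorial 1)
      intro k
      have : ∑' n, F (k, n) = 1 / (Nat.factorial k : ℝ) := by
        rw [hF]
        simp only
        rw [((hasSum_gg k).mul_left (1 / (Nat.factorial k : ℝ))).tsum_eq]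
        norm_num
      rw [this]
      norm_num
  exact key.congr fun p => (hnorm p).symm

lemma hasSum_TT : HasSum TT (Real.exp (-1)) := by
  have hs := summable_TT
  have ht : ∑' p, TT p = Real.exp (-1) := by
    rw [Summable.tsum_prod' hs (fun k => ((hasSum_gg k).mul_left ((-1:ℝ)^k / (Nat.factorial k))).summable)]
    have : ∀ k : ℕ, ∑' n, TT (k, n) = (-1:ℝ)^k / (Nat.factorial k) := by
      intro k
      have h1 : (∑' n, TT (k, n)) = ∑' n, (-1:ℝ)^k / (Nat.factorial k) * gg k n := rfl
      rw [h1, ((hasSum_gg k).mul_left ((-1:ℝ)^k / (Nat.factorial k))).tsum_eq]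
      norm_num
    rw [tsum_congr this]
    rw [Real.exp_eq_exp_ℝ, NormedSpace.exp_eq_tsum_div]
  exact ht ▸ hs.hasSum

lemma hasSum_ff : HasSum ff (Real.exp (-1)) := by
  have hswap : HasSum (fun p : ℕ × ℕ => TT (p.2, p.1)) (Real.exp (-1)) := by
    exact ((Equiv.prodComm ℕ ℕ).hasSum_iff).mpr hasSum_TT
  apply hswap.prod_fiberwise
  intro n
  have : ∀ k ∉ Finset.range (n+1), TT (k, n) = 0 := by
    intro k hk
    simp only [Finset.mem_range] at hk
    rw [TT]
    simp only
    rw [gg_eq_zero (by omega), mul_zero]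
  exact hasSum_sum_of_ne_finset_zero this


/-- The series `Σ_{n=1}^∞ b n` converges and `Σ_{n=1}^∞ b n = 1 − 1/e`. -/
theorem hasSum_b (b : ℕ → ℝ) (hb1 : b 1 = 1 / 2)
    (hb : ∀ n : ℕ, 2 ≤ n →
      b n = (1 / (n : ℝ)) * (1 / ((n : ℝ) + 1) -
        ∑ k ∈ Finset.range (n - 1), b (n - k - 1) / ((k : ℝ) + 2))) :
    HasSum (fun n : ℕ => b (n + 1)) (1 - 1 / Real.exp 1) := by
  have hbe := bb_eq b hb1 hb
  have h1 : HasSum (fun n => ff (n + 1)) (Real.exp (-1) - 1) := by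
    rw [hasSum_nat_add_iff 1]
    have : Real.exp (-1) - 1 + ∑ i ∈ Finset.range 1, ff i = Real.exp (-1) := by
      simp [ff_zero]
    rw [this]
    exact hasSum_ff
  have h2 := h1.neg
  have heq : (fun n : ℕ => b (n + 1)) = fun n => -ff (n + 1) := by
    funext n
    exact hbe (n + 1) (by omega)
  rw [heq]
  have : -(Real.exp (-1) - 1) = 1 - 1 / Real.exp 1 := by
    rw [Real.exp_neg]
    field_simp; ring
  rwa [this] at h2
end
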